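/- arXiv:0804.3029 — 8 statements merged into one kernel-verified Lean document; each statement's English description precedes it below -/
import Mathlib

section
/- If n ≥ 2 and r ≥ ⌊n/2⌋, then there does not exist an (r,≤2)-identifying code in 𝔽ⁿ. -/
open Finset

/-- The Hamming ball of radius `r` around `x` in `𝔽ⁿ = {0,1}ⁿ`. -/
def ballH (n r : ℕ) (x : Fin n → Bool) : Finset (Fin n → Bool) :=
  Finset.univ.filter (fun y => hammingDist x y ≤ r)

/-- `C` is an `(r, ≤ ℓ)`-identifying code in `𝔽ⁿ`. -/
def IdCode (n r ℓ : ℕ) (C : Finset (Fin n → Bool)) : Prop :=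
  C.Nonempty ∧ ∀ X Y : Finset (Fin n → Bool),
    X.card ≤ ℓ → Y.card ≤ ℓ → X ≠ Y →
      (X.biUnion (ballH n r)) ∩ C ≠ (Y.biUnion (ballH n r)) ∩ C

/-- The smallest cardinality of an `(r, ≤ ℓ)`-identifying code in `𝔽ⁿ`. -/
noncomputable def Mid (n r ℓ : ℕ) : ℕ :=
  sInf {k | ∃ C : Finset (Fin n → Bool), IdCode n r ℓ C ∧ C.card = k}

/-- binary entropy -/
noncomputable def binH (x : ℝ) : ℝ :=
  -(x * Real.logb 2 x) - (1 - x) * Real.logb 2 (1 - x)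

/-- m_n(r,ℓ) -/
noncomputable def mlow (n r ℓ : ℕ) : ℕ :=
  sInf {k | ∃ X Y : Finset (Fin n → Bool), X ≠ Y ∧ 1 ≤ X.card ∧ X.card ≤ ℓ ∧
    1 ≤ Y.card ∧ Y.card ≤ ℓ ∧
    (symmDiff (X.biUnion (ballH n r)) (Y.biUnion (ballH n r))).card = k}

/-- N_ℓ : the number of unordered pairs {X, Y} of distinct subsets with 1 ≤ card ≤ ℓ. -/
def Npairs (n ℓ : ℕ) : ℕ :=
  (((Finset.univ : Finset (Finset (Fin n → Bool))).filter
      (fun X => 1 ≤ X.card ∧ X.card ≤ ℓ)).powersetCard 2).card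

lemma dist_add_dist_compl (n : ℕ) (x y : Fin n → Bool) :
    hammingDist x y + hammingDist (fun i => !x i) y = n := by
  classical
  have h := Finset.card_filter_add_card_filter_not
    (s := (univ : Finset (Fin n))) (p := fun i => x i ≠ y i)
  simp only [Finset.card_univ, Fintype.card_fin] at h
  have h1 : hammingDist x y = #(filter (fun i => x i ≠ y i) univ) := rfl
  have h2 : hammingDist (fun i => !x i) y = #(filter (fun a => ¬ x a ≠ y a) univ) := by
    unfold hammingDist
    congr 1
    ext i
    cases x i <;> cases y i <;> simp
  omega

lemma union_balls (n r : ℕ) (hr : n ≤ 2 * r + 1) (x : Fin n → Bool) :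
    ({x, fun i => !x i} : Finset (Fin n → Bool)).biUnion (ballH n r) = Finset.univ := by
  classical
  ext y
  simp only [Finset.mem_biUnion, Finset.mem_insert, Finset.mem_singleton, ballH,
    Finset.mem_filter, Finset.mem_univ, true_and, iff_true]
  by_cases h : hammingDist x y ≤ r
  · exact ⟨x, Or.inl rfl, h⟩
  · refine ⟨_, Or.inr rfl, ?_⟩
    have := dist_add_dist_compl n x y
    omega

/-- If `n ≥ 2` and `r ≥ ⌊n/2⌋`, there is no `(r,≤2)`-identifying code in `𝔽ⁿ`. -/
theorem no_identifying_code_of_large_radius (n r : ℕ) (hn : 2 ≤ n) (hr : n / 2 ≤ r) :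
    ¬ ∃ C : Finset (Fin n → Bool), IdCode n r 2 C := by
  rintro ⟨C, -, hid⟩
  have hr' : n ≤ 2 * r + 1 := by omega
  set x₀ : Fin n → Bool := fun _ => false with hx₀
  set x₁ : Fin n → Bool := fun i => decide (i = ⟨0, by omega⟩) with hx₁
  have hne : ({x₀, fun i => !x₀ i} : Finset (Fin n → Bool)) ≠ {x₁, fun i => !x₁ i} := by
    intro h
    have hx : x₀ ∈ ({x₁, fun i => !x₁ i} : Finset (Fin n → Bool)) := by
      rw [← h]; simp
    simp only [Finset.mem_insert, Finset.mem_singleton] at hx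
    rcases hx with h1 | h2
    · have := congrFun h1 ⟨0, by omega⟩
      simp [hx₀, hx₁] at this
    · have := congrFun h2 ⟨1, by omega⟩
      simp [hx₀, hx₁, Fin.ext_iff] at this
  exact hid _ _ (Finset.card_insert_le _ _ |>.trans (by simp))
    (Finset.card_insert_le _ _ |>.trans (by simp)) hne
    (by rw [union_balls n r hr', union_balls n r hr'])
end

section
/- Let ℓ ≥ 1 be a fixed integer and let L be a fixed integer with L ≥ 2^ℓ. Then there exist n₀ and a constant A such that for every n ≥ n₀, with r = ⌊n/2⌋ − L, there exists an (r,≤ℓ)-identifying code in 𝔽ⁿ of size at most A·n^{2^{ℓ−1}+1}; that is, M_r^{(≤ℓ)}(n) ≤ A·n^{2^{ℓ−1}+1}. -/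
open Finset

lemma one_le_sqrt' {x : ℝ} (h : 1 ≤ x) : 1 ≤ Real.sqrt x := by
  have := Real.sqrt_le_sqrt h
  rwa [Real.sqrt_one] at this

lemma cb_lower : ∀ k : ℕ, 1 ≤ k → (4:ℝ)^k ≤ 2 * Real.sqrt k * Nat.centralBinom k := by
  intro k
  induction k with
  | zero => omega
  | succ k ih =>
    intro _
    rcases Nat.eq_zero_or_pos k with hk | hk
    · subst hk
      norm_num [Nat.centralBinom]
    · have ih' := ih hk
      have hidR : ((k:ℝ)+1) * Nat.centralBinom (k+1) = 2*(2*(k:ℝ)+1) * Nat.centralBinom k := by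
        exact_mod_cast Nat.succ_mul_centralBinom_succ k
      set a := Real.sqrt k with ha
      set b := Real.sqrt ((k:ℝ)+1) with hb
      have hsq : a * a = k := Real.mul_self_sqrt (by positivity)
      have hsq1 : b * b = (k:ℝ)+1 := Real.mul_self_sqrt (by positivity)
      have hb0 : 0 ≤ b := Real.sqrt_nonneg _
      have ha0 : 0 ≤ a := Real.sqrt_nonneg _
      have hkey : 2*((k:ℝ)+1) * a ≤ (2*(k:ℝ)+1) * b := by
        apply le_of_pow_le_pow_left₀ two_ne_zero (by positivity)
        have e1 : (2*((k:ℝ)+1)*a)^2 = 4*(((k:ℝ)+1)*((k:ℝ)+1))*(a*a) := by ring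
        have e2 : ((2*(k:ℝ)+1)*b)^2 = ((2*(k:ℝ)+1)*(2*(k:ℝ)+1))*(b*b) := by ring
        rw [e1, e2, hsq, hsq1]
        nlinarith [Nat.cast_nonneg (α := ℝ) k]
      have hCB0 : (0:ℝ) ≤ Nat.centralBinom k := by positivity
      have hgoal : ((k:ℝ)+1) * (4:ℝ)^(k+1) ≤ ((k:ℝ)+1) * (2 * b * Nat.centralBinom (k+1)) := by
        have h2 : ((k:ℝ)+1) * (2 * b * Nat.centralBinom (k+1)) = 2*b*(((k:ℝ)+1) * Nat.centralBinom (k+1)) := by ring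
        rw [h2, hidR]
        have h3 : 2*b*(2*(2*(k:ℝ)+1) * Nat.centralBinom k) = 4*((2*(k:ℝ)+1)*b) * Nat.centralBinom k := by ring
        rw [h3]
        have h4 : 4*((2*(k:ℝ)+1)*b) * Nat.centralBinom k ≥ 4*(2*((k:ℝ)+1)*a) * Nat.centralBinom k := by
          nlinarith [hkey, hCB0]
        have h5 : ((k:ℝ)+1) * (4:ℝ)^(k+1) ≤ 4*(2*((k:ℝ)+1)*a) * Nat.centralBinom k := by
          have he : (4:ℝ)^(k+1) = 4 * 4^k := by ring
          rw [he]
          nlinarith [ih', hk.le, sq_nonneg a]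
        linarith
      have hkpos : (0:ℝ) < (k:ℝ)+1 := by positivity
      push_cast
      exact le_of_mul_le_mul_left (by linarith [hgoal]) hkpos

lemma half_binom (m : ℕ) : (2:ℝ)^m ≤ 4 * Real.sqrt (m+1) * (m.choose (m/2)) := by
  have hs1 : (1:ℝ) ≤ Real.sqrt ((m:ℝ)+1) := one_le_sqrt' (by linarith [Nat.cast_nonneg (α := ℝ) m])
  rcases Nat.even_or_odd m with ⟨k, hk⟩ | ⟨k, hk⟩
  · subst hk
    rcases Nat.eq_zero_or_pos k with h | h
    · subst h; norm_num
    · have h1 := cb_lower k h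
      have h2 : (k+k)/2 = k := by omega
      rw [h2]
      have h3 : (k+k).choose k = Nat.centralBinom k := by rw [Nat.centralBinom]; congr 1; omega
      rw [h3]
      have h4 : Real.sqrt k ≤ Real.sqrt ((k:ℝ)+k+1) := by
        apply Real.sqrt_le_sqrt; linarith [Nat.cast_nonneg (α := ℝ) k]
      have h5 : (2:ℝ)^(k+k) = 4^k := by rw [← two_mul, pow_mul]; norm_num
      push_cast
      rw [h5]
      calc (4:ℝ)^k ≤ 2 * Real.sqrt k * Nat.centralBinom k := h1
        _ ≤ 4 * Real.sqrt ((k:ℝ)+k+1) * Nat.centralBinom k := by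
            have : (0:ℝ) ≤ Nat.centralBinom k := by positivity
            nlinarith [Real.sqrt_nonneg (k:ℝ)]
  · subst hk
    have h2 : (2*k+1)/2 = k := by omega
    rw [h2]
    rcases Nat.eq_zero_or_pos k with h | h
    · subst h
      have : (1:ℝ) ≤ Real.sqrt 2 := one_le_sqrt' (by norm_num)
      norm_num
      nlinarith
    · have h1 := cb_lower k h
      have h3 : Nat.centralBinom k ≤ (2*k+1).choose k := by
        rw [Nat.centralBinom]
        exact Nat.choose_le_choose k (by omega)
      have h4 : Real.sqrt k ≤ Real.sqrt ((2*(k:ℝ)+1)+1) := by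
        apply Real.sqrt_le_sqrt; linarith [Nat.cast_nonneg (α := ℝ) k]
      have h5 : (2:ℝ)^(2*k+1) = 2 * 4^k := by rw [pow_add, pow_mul]; ring_nf
      push_cast
      rw [h5]
      have h6 : (Nat.centralBinom k : ℝ) ≤ ((2*k+1).choose k : ℝ) := by exact_mod_cast h3
      nlinarith [Real.sqrt_nonneg (k:ℝ), Nat.cast_nonneg (α := ℝ) (Nat.centralBinom k), h1, hs1, h4,
        Real.sqrt_nonneg ((2*(k:ℝ)+1)+1)]

lemma choose_shift (m : ℕ) : ∀ δ : ℕ, 8*δ ≤ m → m.choose (m/2) ≤ 4^δ * m.choose (m/2 - δ) := by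
  intro δ
  induction δ with
  | zero => simp
  | succ δ ih =>
    intro h
    have ih' := ih (by omega)
    -- choose(m, m/2 - δ) ≤ 4 * choose(m, m/2 - (δ+1))
    set k := m/2 - (δ+1) with hk
    have hk1 : m/2 - δ = k + 1 := by omega
    have hid := Nat.choose_succ_right_eq m k
    -- m.choose (k+1) * (k+1) = m.choose k * (m - k)
    have hstep : m.choose (k+1) ≤ 4 * m.choose k := by
      have hmk : m - k ≤ 4 * (k+1) := by omega
      have hpos : 0 < k + 1 := by omega
      nlinarith [hid, Nat.choose_pos (show k ≤ m by omega), Nat.choose_pos (show k+1 ≤ m by omega)]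
    calc m.choose (m/2) ≤ 4^δ * m.choose (m/2 - δ) := ih'
      _ = 4^δ * m.choose (k+1) := by rw [hk1]
      _ ≤ 4^δ * (4 * m.choose k) := by exact Nat.mul_le_mul_left _ hstep
      _ = 4^(δ+1) * m.choose k := by ring

lemma binom_bound (B m δ : ℕ) (hδB : δ ≤ B) (hδm : δ ≤ m/2) :
    (2:ℝ)^m ≤ 2^(8*B+2) * Real.sqrt (m+1) * (m.choose (m/2 - δ)) := by
  have hs1 : (1:ℝ) ≤ Real.sqrt ((m:ℝ)+1) := by
    have := Real.sqrt_le_sqrt (show (1:ℝ) ≤ (m:ℝ)+1 by linarith [Nat.cast_nonneg (α := ℝ) m])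
    rwa [Real.sqrt_one] at this
  have hch1 : (1:ℝ) ≤ (m.choose (m/2 - δ) : ℝ) := by
    exact_mod_cast Nat.one_le_iff_ne_zero.2 (Nat.choose_pos (show m/2 - δ ≤ m by omega)).ne'
  rcases le_or_gt (8*δ) m with h | h
  · have h1 := half_binom m
    have h2 := choose_shift m δ h
    have h2R : (m.choose (m/2) : ℝ) ≤ 4^δ * m.choose (m/2 - δ) := by exact_mod_cast h2
    have h3 : (4:ℝ)^δ ≤ 4^B := by
      apply pow_le_pow_right₀ (by norm_num) hδB
    have h4 : (4:ℝ)^B = 2^(2*B) := by rw [pow_mul]; norm_num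
    calc (2:ℝ)^m ≤ 4 * Real.sqrt (m+1) * (m.choose (m/2)) := h1
      _ ≤ 4 * Real.sqrt (m+1) * (4^δ * m.choose (m/2 - δ)) := by
          have := mul_le_mul_of_nonneg_left h2R (show (0:ℝ) ≤ 4*Real.sqrt (m+1) by positivity)
          nlinarith [this]
      _ ≤ 2^(8*B+2) * Real.sqrt (m+1) * (m.choose (m/2 - δ)) := by
          have h5 : (4:ℝ) * 4^δ ≤ 2^(8*B+2) := by
            calc (4:ℝ) * 4^δ ≤ 4 * 4^B := by nlinarith [pow_pos (show (0:ℝ) < 4 by norm_num) δ]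
              _ = 2^(2*B+2) := by rw [h4]; ring
              _ ≤ 2^(8*B+2) := by apply pow_le_pow_right₀ (by norm_num); omega
          have h6 := mul_le_mul_of_nonneg_right h5
            (show (0:ℝ) ≤ Real.sqrt (m+1) * (m.choose (m/2 - δ)) by positivity)
          nlinarith [h6]
  · have h1 : (2:ℝ)^m ≤ 2^(8*B+2) := by
      apply pow_le_pow_right₀ (by norm_num); omega
    have h0 : (0:ℝ) < 2^(8*B+2) := by positivity
    calc (2:ℝ)^m ≤ 2^(8*B+2) := h1
      _ = 2^(8*B+2) * 1 * 1 := by ring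
      _ ≤ 2^(8*B+2) * Real.sqrt (m+1) * (m.choose (m/2 - δ)) := by
          apply mul_le_mul (by nlinarith) hch1 (by norm_num) (by positivity)

lemma count_prescribed {α K : Type*} [Fintype α] [DecidableEq α] [Fintype K] [DecidableEq K]
    (f : α → K) (c : K → ℕ) :
    ∏ k, ((univ.filter (fun i => f i = k)).card.choose (c k)) ≤
      (univ.filter (fun T : Finset α => ∀ k, (T.filter (fun i => f i = k)).card = c k)).card := by
  classical
  set P := (univ : Finset K).pi (fun k => ((univ.filter (fun i => f i = k)).powersetCard (c k)))
    with hP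
  have hcard : P.card = ∏ k, ((univ.filter (fun i => f i = k)).card.choose (c k)) := by
    rw [hP, Finset.card_pi]
    apply Finset.prod_congr rfl
    intro k _
    rw [Finset.card_powersetCard]
  rw [← hcard]
  set φ : (∀ a : K, a ∈ (univ : Finset K) → Finset α) → Finset α :=
    fun g => univ.biUnion (fun k => g k (mem_univ k)) with hφ
  have hfib : ∀ g ∈ P, ∀ k : K,
      ((φ g).filter (fun i => f i = k)) = g k (mem_univ k) := by
    intro g hg k
    have hsub : ∀ k' : K, g k' (mem_univ k') ⊆ univ.filter (fun i => f i = k') := by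
      intro k'
      have := Finset.mem_pi.1 hg k' (mem_univ k')
      exact (Finset.mem_powersetCard.1 this).1
    ext i
    constructor
    · intro hmem
      obtain ⟨hbi, hfi⟩ := mem_filter.1 hmem
      obtain ⟨k', -, hik'⟩ := mem_biUnion.1 hbi
      have := (mem_filter.1 (hsub k' hik')).2
      rwa [show k = k' by rw [← hfi, this]]
    · intro hi
      exact mem_filter.2 ⟨mem_biUnion.2 ⟨k, mem_univ k, hi⟩, (mem_filter.1 (hsub k hi)).2⟩
  apply Finset.card_le_card_of_injOn φ
  · intro g hg
    simp only [mem_coe] at hg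
    simp only [mem_coe, mem_filter, mem_univ, true_and]
    intro k
    rw [hfib g hg k]
    have := Finset.mem_pi.1 hg k (mem_univ k)
    exact (Finset.mem_powersetCard.1 this).2
  · intro g₁ hg₁ g₂ hg₂ heq
    simp only [mem_coe] at hg₁ hg₂
    funext k hk
    have h1 := hfib g₁ hg₁ k
    have h2 := hfib g₂ hg₂ k
    rw [heq, h2] at h1
    exact h1.symm

lemma hit_aux {α : Type*} [Fintype α] [DecidableEq α] (m : ℝ) (hm : 0 < m) :
    ∀ t : ℕ, ∀ F : Finset (Finset α), (∀ S ∈ F, m ≤ (S.card : ℝ)) →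
      ((F.card : ℝ) * (((Fintype.card α : ℝ) - m)/(Fintype.card α)) ^ t < 1) →
      ∃ C : Finset α, C.card ≤ t ∧ ∀ S ∈ F, (S ∩ C).Nonempty := by
  classical
  intro t
  induction t with
  | zero =>
    intro F hF hlt
    simp only [pow_zero, mul_one] at hlt
    have : F.card = 0 := by exact_mod_cast Nat.lt_one_iff.1 (by exact_mod_cast hlt)
    refine ⟨∅, le_refl _, ?_⟩
    intro S hS
    simp [Finset.card_eq_zero.1 this] at hS
  | succ t ih =>
    intro F hF hlt
    rcases F.eq_empty_or_nonempty with rfl | hFne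
    · exact ⟨∅, by simp, by simp⟩
    set u := Fintype.card α with hu
    have hune : (0:ℝ) < u := by
      obtain ⟨S, hS⟩ := hFne
      have h1 : m ≤ S.card := hF S hS
      have h2 : S.card ≤ u := Finset.card_le_card (subset_univ S)
      have : (0:ℝ) < S.card := lt_of_lt_of_le hm h1
      exact lt_of_lt_of_le this (by exact_mod_cast h2)
    have hmu : m ≤ (u:ℝ) := by
      obtain ⟨S, hS⟩ := hFne
      exact le_trans (hF S hS) (by exact_mod_cast Finset.card_le_card (subset_univ S))
    -- double counting
    have hdouble : (∑ S ∈ F, (S.card : ℝ)) = ∑ v : α, ((F.filter (fun S => v ∈ S)).card : ℝ) := by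
      push_cast
      norm_cast
      calc ∑ S ∈ F, S.card = ∑ S ∈ F, ∑ v : α, (if v ∈ S then 1 else 0) := by
            apply Finset.sum_congr rfl
            intro S _
            rw [Finset.sum_ite_mem, Finset.univ_inter, Finset.card_eq_sum_ones]
        _ = ∑ v : α, ∑ S ∈ F, (if v ∈ S then 1 else 0) := Finset.sum_comm
        _ = ∑ v : α, (F.filter (fun S => v ∈ S)).card := by
            apply Finset.sum_congr rfl
            intro v _
            rw [Finset.card_filter]
    have hex : ∃ v : α, (F.card : ℝ) * m / u ≤ ((F.filter (fun S => v ∈ S)).card : ℝ) := by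
      by_contra hcon
      push_neg at hcon
      have hsum : (∑ v : α, ((F.filter (fun S => v ∈ S)).card : ℝ)) <
          ∑ _v : α, (F.card : ℝ) * m / u := by
        apply Finset.sum_lt_sum_of_nonempty
        · exact univ_nonempty_iff.2 (Fintype.card_pos_iff.1 (by exact_mod_cast hune))
        · intro v _; exact hcon v
      rw [← hdouble] at hsum
      have hsum2 : (F.card : ℝ) * m ≤ ∑ S ∈ F, (S.card : ℝ) := by
        rw [Finset.card_eq_sum_ones F]
        push_cast
        rw [Finset.sum_mul]
        apply Finset.sum_le_sum
        intro S hS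
        rw [one_mul]
        exact hF S hS
      rw [Finset.sum_const, card_univ] at hsum
      have : (u:ℝ) * ((F.card:ℝ) * m / u) = (F.card:ℝ) * m := by field_simp
      rw [nsmul_eq_mul, this] at hsum
      linarith
    obtain ⟨v, hv⟩ := hex
    set F' := F.filter (fun S => v ∉ S) with hF'
    have hcard' : (F'.card : ℝ) ≤ (F.card : ℝ) * (((u:ℝ) - m)/u) := by
      have hsplit : F'.card + (F.filter (fun S => v ∈ S)).card = F.card := by
        rw [hF', add_comm]
        exact Finset.card_filter_add_card_filter_not (fun S => v ∈ S)
      have : (F'.card : ℝ) = (F.card : ℝ) - ((F.filter (fun S => v ∈ S)).card : ℝ) := by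
        have := congrArg (Nat.cast (R := ℝ)) hsplit
        push_cast at this
        linarith
      rw [this]
      have h := hv
      rw [div_le_iff₀ hune] at h
      rw [mul_div_assoc', le_div_iff₀ hune]
      nlinarith [h]
    have hlt' : (F'.card : ℝ) * (((u:ℝ) - m)/u) ^ t < 1 := by
      have h0 : (0:ℝ) ≤ ((u:ℝ) - m)/u := by
        apply div_nonneg (by linarith) (le_of_lt hune)
      have hp : (0:ℝ) ≤ (((u:ℝ) - m)/u) ^ t := pow_nonneg h0 t
      calc (F'.card : ℝ) * (((u:ℝ) - m)/u) ^ t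
          ≤ ((F.card : ℝ) * (((u:ℝ) - m)/u)) * (((u:ℝ) - m)/u) ^ t := by
            exact mul_le_mul_of_nonneg_right hcard' hp
        _ = (F.card : ℝ) * (((u:ℝ) - m)/u) ^ (t+1) := by rw [pow_succ]; ring
        _ < 1 := hlt
    obtain ⟨C', hC'card, hC'⟩ := ih F' (fun S hS => hF S (Finset.mem_filter.1 hS).1) hlt'
    refine ⟨insert v C', ?_, ?_⟩
    · calc (insert v C').card ≤ C'.card + 1 := Finset.card_insert_le v C'
        _ ≤ t + 1 := by omega
    · intro S hS
      by_cases hvS : v ∈ S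
      · exact ⟨v, Finset.mem_inter.2 ⟨hvS, Finset.mem_insert_self v C'⟩⟩
      · obtain ⟨w, hw⟩ := hC' S (Finset.mem_filter.2 ⟨hS, hvS⟩)
        obtain ⟨hw1, hw2⟩ := Finset.mem_inter.1 hw
        exact ⟨w, Finset.mem_inter.2 ⟨hw1, Finset.mem_insert_of_mem hw2⟩⟩

section Key
variable {n : ℕ} (x : Fin n → Bool) (Y : Finset (Fin n → Bool))

-- atom map
def atomf (x : Fin n → Bool) (Y : Finset (Fin n → Bool)) (i : Fin n) : (↥Y → Bool) :=
  fun y => x i != (y : Fin n → Bool) i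

lemma sum_fiber_card :
    ∑ k : (↥Y → Bool), (univ.filter (fun i => atomf x Y i = k)).card = n := by
  classical
  have := Finset.card_eq_sum_card_fiberwise
    (f := atomf x Y) (s := (univ : Finset (Fin n))) (t := univ) (fun i _ => mem_univ _)
  simpa using this.symm

lemma fiber_w (y : Fin n → Bool) (hy : y ∈ Y) :
    (univ.filter (fun i => x i ≠ y i)).card =
      ∑ k ∈ univ.filter (fun k : (↥Y → Bool) => k ⟨y, hy⟩ = true),
        (univ.filter (fun i => atomf x Y i = k)).card := by
  classical
  have h1 : ∀ i ∈ (univ.filter (fun i => x i ≠ y i)),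
      atomf x Y i ∈ univ.filter (fun k : (↥Y → Bool) => k ⟨y, hy⟩ = true) := by
    intro i hi
    simp only [mem_filter, mem_univ, true_and] at hi ⊢
    simpa [atomf, bne_iff_ne] using hi
  have h2 := Finset.card_eq_sum_card_fiberwise h1
  rw [h2]
  apply Finset.sum_congr rfl
  intro k hk
  congr 1
  ext i
  simp only [mem_filter, mem_univ, true_and] at hk ⊢
  constructor
  · rintro ⟨-, h⟩; exact h
  · intro h
    refine ⟨?_, h⟩
    have : atomf x Y i ⟨y, hy⟩ = true := by rw [h]; exact hk
    simpa [atomf, bne_iff_ne] using this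
end Key

section Key
variable {n : ℕ} (x : Fin n → Bool) (Y : Finset (Fin n → Bool))


lemma fiber_T (y : Fin n → Bool) (hy : y ∈ Y) (T : Finset (Fin n)) (c : (↥Y → Bool) → ℕ)
    (hT : ∀ k, (T.filter (fun i => atomf x Y i = k)).card = c k) :
    (T.filter (fun i => x i ≠ y i)).card =
      ∑ k ∈ univ.filter (fun k : (↥Y → Bool) => k ⟨y, hy⟩ = true), c k := by
  classical
  have h1 : ∀ i ∈ (T.filter (fun i => x i ≠ y i)),
      atomf x Y i ∈ univ.filter (fun k : (↥Y → Bool) => k ⟨y, hy⟩ = true) := by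
    intro i hi
    simp only [mem_filter, mem_univ, true_and] at hi ⊢
    simpa [atomf, bne_iff_ne] using hi.2
  rw [Finset.card_eq_sum_card_fiberwise h1]
  apply Finset.sum_congr rfl
  intro k hk
  rw [← hT k]
  congr 1
  ext i
  simp only [mem_filter, mem_univ, true_and] at hk ⊢
  constructor
  · rintro ⟨⟨hiT, -⟩, h⟩; exact ⟨hiT, h⟩
  · rintro ⟨hiT, h⟩
    have : atomf x Y i ⟨y, hy⟩ = true := by rw [h]; exact hk
    refine ⟨⟨hiT, ?_⟩, h⟩
    simpa [atomf, bne_iff_ne] using this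

lemma sum_fiber_T (T : Finset (Fin n)) (c : (↥Y → Bool) → ℕ)
    (hT : ∀ k, (T.filter (fun i => atomf x Y i = k)).card = c k) :
    T.card = ∑ k : (↥Y → Bool), c k := by
  classical
  rw [Finset.card_eq_sum_card_fiberwise (f := atomf x Y) (t := univ) (fun i _ => mem_univ _)]
  exact Finset.sum_congr rfl (fun k _ => hT k)

def zOf (x : Fin n → Bool) (T : Finset (Fin n)) : Fin n → Bool :=
  fun i => if i ∈ T then !(x i) else x i

lemma zOf_dist_x (T : Finset (Fin n)) : hammingDist x (zOf x T) = T.card := by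
  classical
  show (univ.filter (fun i => x i ≠ zOf x T i)).card = T.card
  congr 1
  ext i
  simp only [mem_filter, mem_univ, true_and, zOf]
  by_cases h : i ∈ T <;> simp [h] <;> cases x i <;> simp

lemma zOf_dist_y (T : Finset (Fin n)) (y : Fin n → Bool) :
    hammingDist y (zOf x T) + 2 * (T.filter (fun i => x i ≠ y i)).card
      = T.card + (univ.filter (fun i => x i ≠ y i)).card := by
  classical
  set Sy := univ.filter (fun i => x i ≠ y i) with hSy
  have hd : (univ.filter (fun i => y i ≠ zOf x T i)) = (T \ Sy) ∪ (Sy \ T) := by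
    ext i
    rw [mem_filter]
    simp only [mem_filter, mem_univ, true_and, mem_union, mem_sdiff, hSy, zOf]
    by_cases h : i ∈ T <;> simp [h] <;> cases hx : x i <;> cases hy : y i <;> simp
  have hdisj : Disjoint (T \ Sy) (Sy \ T) := by
    apply Finset.disjoint_left.2
    intro a ha hb
    exact (mem_sdiff.1 hb).2 (mem_sdiff.1 ha).1
  have hdist : hammingDist y (zOf x T) = (T \ Sy).card + (Sy \ T).card := by
    show (univ.filter (fun i => y i ≠ zOf x T i)).card = _
    rw [hd, Finset.card_union_of_disjoint hdisj]
  have hTS : T.filter (fun i => x i ≠ y i) = T ∩ Sy := by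
    ext i; simp [hSy, mem_filter, mem_inter]
  have h1 : (T \ Sy).card + (T ∩ Sy).card = T.card := Finset.card_sdiff_add_card_inter T Sy
  have h2 : (Sy \ T).card + (Sy ∩ T).card = Sy.card := Finset.card_sdiff_add_card_inter Sy T
  have h3 : (Sy ∩ T).card = (T ∩ Sy).card := by rw [Finset.inter_comm]
  rw [hdist, hTS]
  omega

lemma zOf_inj (T₁ T₂ : Finset (Fin n)) (h : zOf x T₁ = zOf x T₂) : T₁ = T₂ := by
  ext i
  have := congrFun h i
  simp only [zOf] at this
  by_cases h1 : i ∈ T₁ <;> by_cases h2 : i ∈ T₂ <;> simp [h1, h2] at this ⊢ <;>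
    cases x i <;> simp_all
end Key

section Key
variable {n : ℕ}

lemma feasible (ℓ L : ℕ) (hℓ : 1 ≤ ℓ) (hL : 2^ℓ ≤ L) (hn : 2^(ℓ+2)*(L+1) + 10 ≤ n)
    (Y : Finset (Fin n → Bool)) (hY : Y.card ≤ ℓ)
    (mm : (↥Y → Bool) → ℕ) (hmsum : ∑ k, mm k = n) :
    ∃ c : (↥Y → Bool) → ℕ,
      (∀ k, ∃ δ : ℕ, c k = mm k / 2 - δ ∧ δ ≤ L + 1 ∧ δ ≤ mm k / 2) ∧
      (∑ k, c k = n/2 - L) ∧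
      (∀ y : Fin n → Bool, (hy : y ∈ Y) → 1 ≤ ∑ k ∈ univ.filter
          (fun k : (↥Y → Bool) => k ⟨y, hy⟩ = true), mm k →
        2 * (∑ k ∈ univ.filter (fun k : (↥Y → Bool) => k ⟨y, hy⟩ = true), c k) + 1 ≤
          ∑ k ∈ univ.filter (fun k : (↥Y → Bool) => k ⟨y, hy⟩ = true), mm k) := by
  classical
  set r := n/2 - L with hr
  have hκcard : Fintype.card (↥Y → Bool) = 2^(Y.card) := by
    rw [Fintype.card_fun, Fintype.card_coe, Fintype.card_bool]
  have hκℓ : Fintype.card (↥Y → Bool) ≤ 2^ℓ := by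
    rw [hκcard]; exact Nat.pow_le_pow_right (by norm_num) hY
  set δ₀ : (↥Y → Bool) → ℕ := fun k => if 2 ≤ mm k ∧ Even (mm k) then 1 else 0 with hδ₀
  have hδ₀le : ∀ k, δ₀ k ≤ 1 := by
    intro k; simp only [hδ₀]; split <;> omega
  have hδ₀cap : ∀ k, δ₀ k ≤ mm k / 2 := by
    intro k; simp only [hδ₀]; split
    · rename_i h; omega
    · omega
  have hδ₀1 : ∀ k, 2 ≤ mm k → Even (mm k) → δ₀ k = 1 := by
    intro k h1 h2; simp only [hδ₀]; rw [if_pos ⟨h1, h2⟩]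
  set P := ∑ k, mm k / 2 with hP
  set o := ∑ k, (if Even (mm k) then 0 else 1) with ho
  set q := ∑ k, δ₀ k with hq
  have h2P : 2 * P + o = n := by
    calc 2 * P + o = ∑ k, (2 * (mm k / 2) + if Even (mm k) then 0 else 1) := by
          rw [hP, ho, Finset.mul_sum, ← Finset.sum_add_distrib]
      _ = ∑ k, mm k := by
          apply Finset.sum_congr rfl
          intro k _
          rcases Nat.even_or_odd (mm k) with he | ho2
          · rw [if_pos he]
            obtain ⟨t, ht⟩ := he
            omega
          · have hne : ¬ Even (mm k) := by
              obtain ⟨t, ht⟩ := ho2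
              simp [ht, parity_simps]
            rw [if_neg hne]
            obtain ⟨t, ht⟩ := ho2
            omega
      _ = n := hmsum
  have hqo : q + o ≤ 2^ℓ := by
    calc q + o = ∑ k, (δ₀ k + if Even (mm k) then 0 else 1) := by
          rw [hq, ho, Finset.sum_add_distrib]
      _ ≤ ∑ _k : (↥Y → Bool), 1 := by
          apply Finset.sum_le_sum
          intro k _
          rcases Nat.even_or_odd (mm k) with he | ho2
          · rw [if_pos he]; have := hδ₀le k; omega
          · have hne : ¬ Even (mm k) := by
              obtain ⟨t, ht⟩ := ho2
              simp [ht, parity_simps]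
            rw [if_neg hne]
            have h0 : δ₀ k = 0 := by
              simp only [hδ₀]; rw [if_neg]; rintro ⟨-, h⟩; exact hne h
            omega
      _ = Fintype.card (↥Y → Bool) := by simp
      _ ≤ 2^ℓ := hκℓ
  have hoκ : o ≤ 2^ℓ := by omega
  have hrP : r ≤ P ∧ P - r ≤ L := by constructor <;> omega
  set D' := P - r - q with hD'
  have hD'L : D' ≤ L := by omega
  have hk0ex : ∃ k0 : (↥Y → Bool), δ₀ k0 + D' ≤ mm k0 / 2 := by
    by_contra hcon
    push_neg at hcon
    have hstep : ∀ k : (↥Y → Bool), mm k / 2 + 1 ≤ δ₀ k + D' := fun k => hcon k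
    have hsum : P + Fintype.card (↥Y → Bool) ≤ q + Fintype.card (↥Y → Bool) * D' := by
      calc P + Fintype.card (↥Y → Bool) = ∑ k : (↥Y → Bool), (mm k / 2 + 1) := by
            rw [hP, Finset.sum_add_distrib]; simp
        _ ≤ ∑ k : (↥Y → Bool), (δ₀ k + D') := Finset.sum_le_sum (fun k _ => hstep k)
        _ = q + Fintype.card (↥Y → Bool) * D' := by
            rw [Finset.sum_add_distrib, hq]; simp [mul_comm]
    have hKpos : 1 ≤ Fintype.card (↥Y → Bool) := Fintype.card_pos
    have hPle : P ≤ 2^ℓ + 2^ℓ * L := by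
      have h1 : Fintype.card (↥Y → Bool) * D' ≤ 2^ℓ * L := Nat.mul_le_mul hκℓ hD'L
      omega
    have ha1 : 2^ℓ + 2^ℓ * L = 2^ℓ * (L+1) := by ring
    have ha2 : 2^(ℓ+2)*(L+1) = 4*(2^ℓ*(L+1)) := by ring
    have ha3 : L + 1 ≤ 2^ℓ*(L+1) := Nat.le_mul_of_pos_left _ (Nat.two_pow_pos ℓ)
    omega
  obtain ⟨k0, hk0⟩ := hk0ex
  set δ : (↥Y → Bool) → ℕ := fun k => δ₀ k + if k = k0 then D' else 0 with hδ
  have hδk0 : δ k0 = δ₀ k0 + D' := by simp [hδ]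
  have hδne : ∀ k, k ≠ k0 → δ k = δ₀ k := by intro k h; simp [hδ, h]
  have hδ₀δ : ∀ k, δ₀ k ≤ δ k := by
    intro k
    by_cases h : k = k0
    · rw [h, hδk0]; omega
    · rw [hδne k h]
  have hδle : ∀ k, δ k ≤ mm k / 2 := by
    intro k
    by_cases h : k = k0
    · rw [h, hδk0]; omega
    · rw [hδne k h]; exact hδ₀cap k
  have hδB : ∀ k, δ k ≤ L + 1 := by
    intro k
    by_cases h : k = k0
    · rw [h, hδk0]; have := hδ₀le k0; omega
    · rw [hδne k h]; have := hδ₀le k; omega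
  set c : (↥Y → Bool) → ℕ := fun k => mm k / 2 - δ k with hc
  have hcval : ∀ k, c k = mm k / 2 - δ k := fun k => rfl
  have hsumδ : ∑ k, δ k = q + D' := by
    rw [hδ, Finset.sum_add_distrib, hq]
    congr 1
    rw [Finset.sum_ite_eq' univ k0 (fun _ => D')]
    simp
  have hsumc : ∑ k, c k = r := by
    have h1 : ∑ k, (c k + δ k) = P := by
      rw [hP]
      apply Finset.sum_congr rfl
      intro k _
      have := hδle k
      rw [hcval k]
      omega
    rw [Finset.sum_add_distrib, hsumδ] at h1
    omega
  refine ⟨c, fun k => ⟨δ k, rfl, hδB k, hδle k⟩, hsumc, ?_⟩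
  intro y hy hw
  set Ky := univ.filter (fun k : (↥Y → Bool) => k ⟨y, hy⟩ = true) with hKy
  have hex : ∃ k ∈ Ky, 1 ≤ mm k := by
    by_contra hcon
    push_neg at hcon
    have : ∑ k ∈ Ky, mm k = 0 := Finset.sum_eq_zero (fun k hk => by
      have := hcon k hk; omega)
    omega
  obtain ⟨k1, hk1Ky, hk1⟩ := hex
  have hserve : 2 * c k1 + 1 ≤ mm k1 := by
    rcases Nat.even_or_odd (mm k1) with he | ho2
    · have h2 : 2 ≤ mm k1 := by
        obtain ⟨t, ht⟩ := he; omega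
      have h3 := hδ₀1 k1 h2 he
      have h4 := hδ₀δ k1
      have h5 := hδle k1
      rw [hcval k1]
      obtain ⟨t, ht⟩ := he
      omega
    · have h5 := hδle k1
      rw [hcval k1]
      obtain ⟨t, ht⟩ := ho2
      omega
  have hpt : ∀ k ∈ Ky, 2 * c k ≤ mm k := by
    intro k _
    have := hδle k
    rw [hcval k]
    omega
  have hlt : ∑ k ∈ Ky, 2 * c k < ∑ k ∈ Ky, mm k := by
    apply Finset.sum_lt_sum hpt
    exact ⟨k1, hk1Ky, by omega⟩
  rw [← Finset.mul_sum] at hlt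
  omega
end Key
section KeyMain
variable {n : ℕ}

lemma arith1 (d a tc w r : ℕ) (h1 : 2*a+1 ≤ w) (h2 : d + 2*a = tc + w) (h3 : a ≤ tc)
    (h4 : tc = r) : ¬ d ≤ r := by omega

lemma key (ℓ L : ℕ) (hℓ : 1 ≤ ℓ) (hL : 2^ℓ ≤ L) (hn : 2^(ℓ+2)*(L+1) + 10 ≤ n)
    (x : Fin n → Bool) (Y : Finset (Fin n → Bool)) (hx : x ∉ Y) (hY : Y.card ≤ ℓ) :
    (2:ℝ)^n ≤ (2:ℝ)^((8*(L+1)+2) * 2^ℓ) * ((n:ℝ)+1)^(2^(ℓ-1)) *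
      (((ballH n (n/2-L) x \ Y.biUnion (ballH n (n/2-L))).card : ℝ)) := by
  classical
  set r := n/2 - L with hr
  set mm : (↥Y → Bool) → ℕ := fun k => (univ.filter (fun i => atomf x Y i = k)).card with hmm
  have hmsum : ∑ k, mm k = n := sum_fiber_card x Y
  obtain ⟨c, hcδ, hsumc, hcond⟩ := feasible ℓ L hℓ hL hn Y hY mm hmsum
  set Tset := univ.filter
    (fun T : Finset (Fin n) => ∀ k, (T.filter (fun i => atomf x Y i = k)).card = c k) with hTset
  have hprod : ∏ k, (mm k).choose (c k) ≤ Tset.card := count_prescribed (atomf x Y) c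
  set Q := ballH n r x \ Y.biUnion (ballH n r) with hQdef
  -- every T in Tset maps into Q
  have hmaps : ∀ T ∈ Tset, zOf x T ∈ Q := by
    intro T hT
    have hTfib : ∀ k, (T.filter (fun i => atomf x Y i = k)).card = c k :=
      (mem_filter.1 hT).2
    have hTcard : T.card = r := by
      rw [sum_fiber_T x Y T c hTfib, hsumc]
    have hdx : hammingDist x (zOf x T) = r := by rw [zOf_dist_x, hTcard]
    rw [hQdef, mem_sdiff]
    constructor
    · simp only [ballH, mem_filter, mem_univ, true_and, hdx, le_refl]
    · intro hmem
      rw [mem_biUnion] at hmem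
      obtain ⟨y, hy, hyz⟩ := hmem
      simp only [ballH, mem_filter, mem_univ, true_and] at hyz
      -- derive contradiction
      have hxy : x ≠ y := fun h => hx (h ▸ hy)
      have hw1 : 1 ≤ ∑ k ∈ univ.filter (fun k : (↥Y → Bool) => k ⟨y, hy⟩ = true), mm k := by
        rw [← fiber_w x Y y hy]
        have : (univ.filter (fun i => x i ≠ y i)).Nonempty := by
          obtain ⟨i, hi⟩ := Function.ne_iff.1 hxy
          exact ⟨i, mem_filter.2 ⟨mem_univ i, hi⟩⟩
        exact Nat.one_le_iff_ne_zero.2 (Finset.card_ne_zero_of_mem this.choose_spec)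
      have hcnd := hcond y hy hw1
      have ha : (T.filter (fun i => x i ≠ y i)).card =
          ∑ k ∈ univ.filter (fun k : (↥Y → Bool) => k ⟨y, hy⟩ = true), c k :=
        fiber_T x Y y hy T c hTfib
      have hdy := zOf_dist_y x T y
      rw [← fiber_w x Y y hy] at hcnd
      rw [← ha] at hcnd
      have haT : (T.filter (fun i => x i ≠ y i)).card ≤ T.card :=
        Finset.card_le_card (Finset.filter_subset _ _)
      exact arith1 _ _ _ _ _ hcnd hdy haT hTcard hyz
  have hinj : Set.InjOn (zOf x) Tset := by
    intro T₁ h₁ T₂ h₂ h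
    exact zOf_inj x T₁ T₂ h
  have hQcard : Tset.card ≤ Q.card := Finset.card_le_card_of_injOn (zOf x) hmaps hinj
  -- real estimates
  set κ := Fintype.card (↥Y → Bool) with hκ
  have hκℓ : κ ≤ 2^ℓ := by
    rw [hκ, Fintype.card_fun, Fintype.card_coe, Fintype.card_bool]
    exact Nat.pow_le_pow_right (by norm_num) hY
  have hsqrt1 : (1:ℝ) ≤ Real.sqrt ((n:ℝ)+1) := by
    have := Real.sqrt_le_sqrt (show (1:ℝ) ≤ (n:ℝ)+1 by linarith [Nat.cast_nonneg (α := ℝ) n])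
    rwa [Real.sqrt_one] at this
  have hperatom : ∀ k : (↥Y → Bool),
      (2:ℝ)^(mm k) ≤ 2^(8*(L+1)+2) * Real.sqrt ((n:ℝ)+1) * ((mm k).choose (c k)) := by
    intro k
    obtain ⟨δ, hcval, hδB, hδcap⟩ := hcδ k
    have h1 : (2:ℝ)^(mm k) ≤ 2^(8*(L+1)+2) * Real.sqrt ((mm k:ℝ)+1) * ((mm k).choose (mm k / 2 - δ)) := by
      have := binom_bound (L+1) (mm k) δ hδB hδcap
      convert this using 3 <;> push_cast <;> ring
    rw [← hcval] at h1
    have hmono : Real.sqrt ((mm k:ℝ)+1) ≤ Real.sqrt ((n:ℝ)+1) := by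
      apply Real.sqrt_le_sqrt
      have : mm k ≤ n := by
        rw [← hmsum]
        exact Finset.single_le_sum (fun _ _ => Nat.zero_le _) (mem_univ k)
      push_cast
      linarith [Nat.cast_le (α := ℝ) |>.2 this]
    calc (2:ℝ)^(mm k) ≤ 2^(8*(L+1)+2) * Real.sqrt ((mm k:ℝ)+1) * ((mm k).choose (c k)) := h1
      _ ≤ 2^(8*(L+1)+2) * Real.sqrt ((n:ℝ)+1) * ((mm k).choose (c k)) := by
          apply mul_le_mul_of_nonneg_right _ (by positivity)
          apply mul_le_mul_of_nonneg_left hmono (by positivity)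
  have hprodL : (2:ℝ)^n = ∏ k : (↥Y → Bool), (2:ℝ)^(mm k) := by
    rw [Finset.prod_pow_eq_pow_sum, hmsum]
  have hprodR : ∏ k : (↥Y → Bool), ((2:ℝ)^(8*(L+1)+2) * Real.sqrt ((n:ℝ)+1) * ((mm k).choose (c k)))
      = ((2:ℝ)^(8*(L+1)+2))^κ * (Real.sqrt ((n:ℝ)+1))^κ * ∏ k, ((mm k).choose (c k) : ℝ) := by
    rw [Finset.prod_mul_distrib, Finset.prod_mul_distrib, Finset.prod_const, Finset.prod_const,
      Finset.card_univ]
  have hstep1 : (2:ℝ)^n ≤ ((2:ℝ)^(8*(L+1)+2))^κ * (Real.sqrt ((n:ℝ)+1))^κ *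
      ∏ k, ((mm k).choose (c k) : ℝ) := by
    rw [hprodL, ← hprodR]
    exact Finset.prod_le_prod (fun k _ => by positivity) (fun k _ => hperatom k)
  have hc1 : ((2:ℝ)^(8*(L+1)+2))^κ ≤ (2:ℝ)^((8*(L+1)+2) * 2^ℓ) := by
    rw [← pow_mul]
    apply pow_le_pow_right₀ (by norm_num)
    exact Nat.mul_le_mul_left _ hκℓ
  have hc2 : (Real.sqrt ((n:ℝ)+1))^κ ≤ ((n:ℝ)+1)^(2^(ℓ-1)) := by
    calc (Real.sqrt ((n:ℝ)+1))^κ ≤ (Real.sqrt ((n:ℝ)+1))^(2^ℓ) :=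
          pow_le_pow_right₀ hsqrt1 hκℓ
      _ = ((n:ℝ)+1)^(2^(ℓ-1)) := by
          have h2ℓ : 2^ℓ = 2 * 2^(ℓ-1) := by
            conv_lhs => rw [show ℓ = 1 + (ℓ-1) by omega]
            rw [pow_add, pow_one]
          rw [h2ℓ, pow_mul, Real.sq_sqrt (by positivity)]
  have hc3 : (∏ k, ((mm k).choose (c k) : ℝ)) ≤ (Q.card : ℝ) := by
    have : (∏ k, ((mm k).choose (c k) : ℝ)) = ((∏ k, (mm k).choose (c k) : ℕ) : ℝ) := by
      push_cast; rfl
    rw [this]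
    exact_mod_cast le_trans hprod hQcard
  calc (2:ℝ)^n ≤ ((2:ℝ)^(8*(L+1)+2))^κ * (Real.sqrt ((n:ℝ)+1))^κ *
        ∏ k, ((mm k).choose (c k) : ℝ) := hstep1
    _ ≤ (2:ℝ)^((8*(L+1)+2) * 2^ℓ) * ((n:ℝ)+1)^(2^(ℓ-1)) * (Q.card : ℝ) := by
        have hnn1 : (0:ℝ) ≤ ∏ k, ((mm k).choose (c k) : ℝ) :=
          Finset.prod_nonneg (fun k _ => by positivity)
        apply mul_le_mul
        · apply mul_le_mul hc1 hc2 (by positivity) (by positivity)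
        · exact hc3
        · exact hnn1
        · positivity
end KeyMain
section Assembly
variable {n : ℕ}

lemma symmDiff_inter {α : Type*} [DecidableEq α] (s t C : Finset α) :
    (symmDiff s t) ∩ C = symmDiff (s ∩ C) (t ∩ C) := by
  ext a
  simp only [mem_inter, Finset.mem_symmDiff]
  tauto

lemma pair_bound (ℓ L : ℕ) (hℓ : 1 ≤ ℓ) (hL : 2^ℓ ≤ L) (hn : 2^(ℓ+2)*(L+1) + 10 ≤ n)
    (X Y : Finset (Fin n → Bool)) (hX : X.card ≤ ℓ) (hY : Y.card ≤ ℓ) (hXY : X ≠ Y) :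
    (2:ℝ)^n ≤ (2:ℝ)^((8*(L+1)+2) * 2^ℓ) * ((n:ℝ)+1)^(2^(ℓ-1)) *
      (((symmDiff (X.biUnion (ballH n (n/2-L))) (Y.biUnion (ballH n (n/2-L)))).card : ℝ)) := by
  classical
  have hwlog : ∀ (X' Y' : Finset (Fin n → Bool)), X'.card ≤ ℓ → Y'.card ≤ ℓ →
      ∀ x, x ∈ X' → x ∉ Y' →
      (2:ℝ)^n ≤ (2:ℝ)^((8*(L+1)+2) * 2^ℓ) * ((n:ℝ)+1)^(2^(ℓ-1)) *
      (((symmDiff (X'.biUnion (ballH n (n/2-L))) (Y'.biUnion (ballH n (n/2-L)))).card : ℝ)) := by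
    intro X' Y' hX' hY' x hxX hxY
    have hkey := key ℓ L hℓ hL hn x Y' hxY hY'
    have hsub : ballH n (n/2-L) x \ Y'.biUnion (ballH n (n/2-L)) ⊆
        symmDiff (X'.biUnion (ballH n (n/2-L))) (Y'.biUnion (ballH n (n/2-L))) := by
      intro z hz
      rw [mem_sdiff] at hz
      rw [Finset.mem_symmDiff]
      exact Or.inl ⟨mem_biUnion.2 ⟨x, hxX, hz.1⟩, hz.2⟩
    have hcard : ((ballH n (n/2-L) x \ Y'.biUnion (ballH n (n/2-L))).card : ℝ) ≤
        ((symmDiff (X'.biUnion (ballH n (n/2-L))) (Y'.biUnion (ballH n (n/2-L)))).card : ℝ) := by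
      exact_mod_cast Finset.card_le_card hsub
    calc (2:ℝ)^n ≤ (2:ℝ)^((8*(L+1)+2) * 2^ℓ) * ((n:ℝ)+1)^(2^(ℓ-1)) *
          ((ballH n (n/2-L) x \ Y'.biUnion (ballH n (n/2-L))).card : ℝ) := hkey
      _ ≤ _ := by
          apply mul_le_mul_of_nonneg_left hcard
          positivity
  have hex : (∃ x, x ∈ X ∧ x ∉ Y) ∨ (∃ x, x ∈ Y ∧ x ∉ X) := by
    by_contra hcon
    push_neg at hcon
    apply hXY
    ext a
    constructor
    · intro h
      exact hcon.1 a h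
    · intro h
      exact hcon.2 a h
  rcases hex with ⟨x, hx1, hx2⟩ | ⟨x, hx1, hx2⟩
  · exact hwlog X Y hX hY x hx1 hx2
  · rw [symmDiff_comm]
    exact hwlog Y X hY hX x hx1 hx2

lemma card_small_sets (ℓ : ℕ) :
    (((univ : Finset (Finset (Fin n → Bool))).filter (fun X => X.card ≤ ℓ)).card : ℕ) ≤
      (ℓ+1) * (2^n + 1)^ℓ := by
  classical
  have hsub : (univ : Finset (Finset (Fin n → Bool))).filter (fun X => X.card ≤ ℓ) ⊆
      (Finset.range (ℓ+1)).biUnion (fun i => (univ : Finset (Fin n → Bool)).powersetCard i) := by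
    intro X hX
    rw [mem_filter] at hX
    rw [mem_biUnion]
    exact ⟨X.card, Finset.mem_range.2 (by omega), Finset.mem_powersetCard.2 ⟨subset_univ X, rfl⟩⟩
  calc _ ≤ ((Finset.range (ℓ+1)).biUnion
        (fun i => (univ : Finset (Fin n → Bool)).powersetCard i)).card :=
        Finset.card_le_card hsub
    _ ≤ ∑ i ∈ Finset.range (ℓ+1), ((univ : Finset (Fin n → Bool)).powersetCard i).card :=
        Finset.card_biUnion_le
    _ ≤ ∑ _i ∈ Finset.range (ℓ+1), (2^n + 1)^ℓ := by
        apply Finset.sum_le_sum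
        intro i hi
        rw [Finset.card_powersetCard, Finset.card_univ]
        have h2 : Fintype.card (Fin n → Bool) = 2^n := by
          rw [Fintype.card_fun, Fintype.card_bool, Fintype.card_fin]
        rw [h2]
        calc (2^n).choose i ≤ (2^n)^i := Nat.choose_le_pow _ _
          _ ≤ (2^n+1)^i := Nat.pow_le_pow_left (by omega) i
          _ ≤ (2^n+1)^ℓ := Nat.pow_le_pow_right (by omega) (by
              have := Finset.mem_range.1 hi; omega)
    _ = (ℓ+1) * (2^n + 1)^ℓ := by
        rw [Finset.sum_const, Finset.card_range, smul_eq_mul]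
end Assembly

/-- For fixed `ℓ ≥ 1` and fixed `L ≥ 2^ℓ`, there are `n₀` and `A` such that
for all `n ≥ n₀`, with `r = ⌊n/2⌋ - L`, there exists an `(r,≤ℓ)`-identifying code of size
at most `A·n^{2^{ℓ-1}+1}`; in particular `M_r^{(≤ℓ)}(n) ≤ A·n^{2^{ℓ-1}+1}`. -/
theorem identifying_code_size_polynomial (ℓ L : ℕ) (hℓ : 1 ≤ ℓ) (hL : 2 ^ ℓ ≤ L) :
    ∃ (n₀ : ℕ) (A : ℝ), ∀ n : ℕ, n₀ ≤ n →
      (∃ C : Finset (Fin n → Bool), IdCode n (n / 2 - L) ℓ C ∧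
        (C.card : ℝ) ≤ A * (n : ℝ) ^ (2 ^ (ℓ - 1) + 1)) ∧
      (Mid n (n / 2 - L) ℓ : ℝ) ≤ A * (n : ℝ) ^ (2 ^ (ℓ - 1) + 1) := by
  classical
  set e := 2^(ℓ-1) with he
  set Cst := 2^((8*(L+1)+2) * 2^ℓ) with hCst
  refine ⟨2^(ℓ+2)*(L+1) + 10, ((Cst * 2^e * (4*ℓ+1) : ℕ) : ℝ), ?_⟩
  intro n hn
  set r := n/2 - L with hr
  have hn2 : 2 ≤ n := by
    have h8 : 8 ≤ 2^(ℓ+2) := by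
      calc (8:ℕ) = 2^3 := by norm_num
        _ ≤ 2^(ℓ+2) := Nat.pow_le_pow_right (by norm_num) (by omega)
    have h9 : 2^(ℓ+2) ≤ 2^(ℓ+2)*(L+1) := Nat.le_mul_of_pos_right _ (by omega)
    omega
  have hCst2 : (2:ℕ) ≤ Cst := by
    rw [hCst]
    calc (2:ℕ) = 2^1 := by norm_num
      _ ≤ 2^((8*(L+1)+2) * 2^ℓ) := Nat.pow_le_pow_right (by norm_num)
          (Nat.one_le_iff_ne_zero.2 (by positivity))
  set D : ℝ := (Cst : ℝ) * ((n:ℝ)+1)^e with hD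
  have hone : (1:ℝ) ≤ ((n:ℝ)+1)^e := one_le_pow₀ (by linarith [Nat.cast_nonneg (α := ℝ) n])
  have hD2 : (2:ℝ) ≤ D := by
    rw [hD]
    calc (2:ℝ) = 2 * 1 := by norm_num
      _ ≤ (Cst : ℝ) * ((n:ℝ)+1)^e := by
          apply mul_le_mul (by exact_mod_cast hCst2) hone (by norm_num) (by positivity)
  have hD0 : (0:ℝ) < D := by linarith
  set mr : ℝ := (2:ℝ)^n / D with hmr
  have hmr0 : 0 < mr := by positivity
  set g := fun p : Finset (Fin n → Bool) × Finset (Fin n → Bool) =>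
    symmDiff (p.1.biUnion (ballH n r)) (p.2.biUnion (ballH n r)) with hg
  set F := (((univ : Finset (Finset (Fin n → Bool))) ×ˢ univ).filter
    (fun p => p.1.card ≤ ℓ ∧ p.2.card ≤ ℓ ∧ p.1 ≠ p.2)).image g with hF
  have hFm : ∀ S ∈ F, mr ≤ (S.card : ℝ) := by
    intro S hS
    obtain ⟨p, hp, rfl⟩ := Finset.mem_image.1 hS
    rw [mem_filter] at hp
    obtain ⟨-, h1, h2, h3⟩ := hp
    have hpb := pair_bound ℓ L hℓ hL hn p.1 p.2 h1 h2 h3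
    rw [hmr, div_le_iff₀ hD0]
    calc (2:ℝ)^n ≤ (2:ℝ)^((8*(L+1)+2) * 2^ℓ) * ((n:ℝ)+1)^(2^(ℓ-1)) * ((g p).card : ℝ) := hpb
      _ = ((g p).card : ℝ) * D := by
          rw [hD, hCst, he]
          push_cast
          ring
  have hu : ((Fintype.card (Fin n → Bool) : ℕ) : ℝ) = 2^n := by
    rw [Fintype.card_fun, Fintype.card_bool, Fintype.card_fin]
    push_cast
    rfl
  set t := Cst * (n+1)^e * (2*ℓ*(n+2) + 1) with ht
  have hDcast : ((Cst * (n+1)^e : ℕ) : ℝ) = D := by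
    rw [hD]; push_cast; ring
  have htcast : (t:ℝ) = D * (2*ℓ*(n+2)+1) := by
    rw [ht, hD]
    push_cast
    ring
  have htD : (t:ℝ)/D = 2*ℓ*(n+2)+1 := by
    rw [htcast, mul_comm, mul_div_assoc, div_self (ne_of_gt hD0), mul_one]
  have hpre : (F.card : ℝ) *
      (((Fintype.card (Fin n → Bool) : ℝ) - mr)/(Fintype.card (Fin n → Bool))) ^ t < 1 := by
    have hρ : ((Fintype.card (Fin n → Bool) : ℝ) - mr)/(Fintype.card (Fin n → Bool))
        = 1 - 1/D := by
      rw [hu, hmr]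
      field_simp
    rw [hρ]
    have h1D : 1/D ≤ 1/2 := by
      apply div_le_div_of_nonneg_left (by norm_num) (by norm_num) hD2
    have h1D0 : 0 < 1/D := by positivity
    have hexp : 1 - 1/D ≤ Real.exp (-(1/D)) := by
      have := Real.add_one_le_exp (-(1/D))
      linarith
    have hpow : (1 - 1/D)^t ≤ Real.exp (-((t:ℝ)/D)) := by
      calc (1 - 1/D)^t ≤ (Real.exp (-(1/D)))^t := by
            apply pow_le_pow_left₀ (by linarith) hexp
        _ = Real.exp (-((t:ℝ)/D)) := by
            rw [← Real.exp_nat_mul]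
            congr 1
            field_simp
    -- bound F.card
    have hNfilter : F.card ≤ ((ℓ+1) * (2^n + 1)^ℓ) * ((ℓ+1) * (2^n + 1)^ℓ) := by
      calc F.card ≤ (((univ : Finset (Finset (Fin n → Bool))) ×ˢ univ).filter
            (fun p => p.1.card ≤ ℓ ∧ p.2.card ≤ ℓ ∧ p.1 ≠ p.2)).card := Finset.card_image_le
        _ ≤ (((univ : Finset (Finset (Fin n → Bool))).filter (fun X => X.card ≤ ℓ)) ×ˢ
              ((univ : Finset (Finset (Fin n → Bool))).filter (fun X => X.card ≤ ℓ))).card := by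
            apply Finset.card_le_card
            intro p hp
            rw [mem_filter] at hp
            rw [Finset.mem_product]
            exact ⟨mem_filter.2 ⟨mem_univ _, hp.2.1⟩, mem_filter.2 ⟨mem_univ _, hp.2.2.1⟩⟩
        _ = (((univ : Finset (Finset (Fin n → Bool))).filter (fun X => X.card ≤ ℓ)).card) *
              (((univ : Finset (Finset (Fin n → Bool))).filter (fun X => X.card ≤ ℓ)).card) :=
            Finset.card_product _ _
        _ ≤ _ := Nat.mul_le_mul (card_small_sets ℓ) (card_small_sets ℓ)
    have hsmall : (ℓ+1) * (2^n + 1)^ℓ ≤ 2^(ℓ*(n+2)) := by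
      have ha : ℓ+1 ≤ 2^ℓ := Nat.lt_two_pow_self
      have hb : 2^n + 1 ≤ 2^(n+1) := by
        have : 1 ≤ 2^n := Nat.one_le_two_pow
        rw [pow_succ]
        omega
      calc (ℓ+1) * (2^n + 1)^ℓ ≤ 2^ℓ * (2^(n+1))^ℓ :=
            Nat.mul_le_mul ha (Nat.pow_le_pow_left hb ℓ)
        _ = 2^(ℓ*(n+2)) := by
            rw [← pow_mul, ← pow_add]
            congr 1
            ring
    have hNco : (F.card : ℝ) ≤ 2^(2*ℓ*(n+2)) := by
      have h1 : F.card ≤ 2^(ℓ*(n+2)) * 2^(ℓ*(n+2)) :=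
        le_trans hNfilter (Nat.mul_le_mul hsmall hsmall)
      have h2 : (2:ℕ)^(ℓ*(n+2)) * 2^(ℓ*(n+2)) = 2^(2*ℓ*(n+2)) := by
        rw [← pow_add]
        congr 1
        ring
      rw [h2] at h1
      exact_mod_cast h1
    have h2exp : (2:ℝ)^(2*ℓ*(n+2)) ≤ Real.exp (2*ℓ*(n+2)) := by
      calc (2:ℝ)^(2*ℓ*(n+2)) ≤ (Real.exp 1)^(2*ℓ*(n+2)) := by
            apply pow_le_pow_left₀ (by norm_num)
            have := Real.add_one_le_exp 1
            linarith
        _ = Real.exp (2*ℓ*(n+2)) := by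
            rw [Real.exp_one_pow]
            congr 1
            push_cast
            ring
    calc (F.card : ℝ) * (1 - 1/D)^t ≤ 2^(2*ℓ*(n+2)) * Real.exp (-((t:ℝ)/D)) := by
          apply mul_le_mul hNco hpow (pow_nonneg (by linarith) t) (by positivity)
      _ = 2^(2*ℓ*(n+2)) * Real.exp (-(2*ℓ*(n+2)+1)) := by rw [htD]
      _ ≤ Real.exp (2*ℓ*(n+2)) * Real.exp (-(2*ℓ*(n+2)+1)) := by
          apply mul_le_mul_of_nonneg_right h2exp (by positivity)
      _ = Real.exp (-1) := by
          rw [← Real.exp_add]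
          congr 1
          push_cast
          ring
      _ < 1 := by
          rw [show (1:ℝ) = Real.exp 0 by rw [Real.exp_zero]]
          exact Real.exp_lt_exp.2 (by norm_num)
  obtain ⟨C, hCt, hChits⟩ := hit_aux mr hmr0 t F hFm hpre
  -- C is nonempty
  have hx0 : (({(fun _ => false : Fin n → Bool)} : Finset (Fin n → Bool)), (∅ : Finset (Fin n → Bool)))
      ∈ ((univ : Finset (Finset (Fin n → Bool))) ×ˢ univ).filter
        (fun p => p.1.card ≤ ℓ ∧ p.2.card ≤ ℓ ∧ p.1 ≠ p.2) := by
    rw [mem_filter]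
    refine ⟨Finset.mem_product.2 ⟨mem_univ _, mem_univ _⟩, ?_, by simp, by simp⟩
    rw [Finset.card_singleton]
    omega
  have hS0 : g ({(fun _ => false : Fin n → Bool)}, ∅) ∈ F := Finset.mem_image_of_mem g hx0
  have hCne : C.Nonempty := by
    obtain ⟨w, hw⟩ := hChits _ hS0
    exact ⟨w, (Finset.mem_inter.1 hw).2⟩
  have hCode : IdCode n r ℓ C := by
    refine ⟨hCne, ?_⟩
    intro X Y hX hY hXY heq
    have hmemF : g (X, Y) ∈ F := Finset.mem_image_of_mem g (mem_filter.2
      ⟨Finset.mem_product.2 ⟨mem_univ _, mem_univ _⟩, hX, hY, hXY⟩)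
    obtain ⟨w, hw⟩ := hChits _ hmemF
    rw [Finset.mem_inter] at hw
    have hw1 : w ∈ (symmDiff (X.biUnion (ballH n r)) (Y.biUnion (ballH n r))) ∩ C :=
      Finset.mem_inter.2 hw
    rw [symmDiff_inter, heq] at hw1
    simp at hw1
  -- cardinality bound
  have htb : (t : ℕ) ≤ Cst * 2^e * (4*ℓ+1) * n^(e+1) := by
    have h1 : (n+1)^e ≤ 2^e * n^e := by
      calc (n+1)^e ≤ (2*n)^e := Nat.pow_le_pow_left (by omega) e
        _ = 2^e * n^e := by rw [mul_pow]
    have h2 : 2*ℓ*(n+2) + 1 ≤ (4*ℓ+1)*n := by nlinarith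
    calc t ≤ Cst * (2^e * n^e) * ((4*ℓ+1)*n) := by
          rw [ht]
          exact Nat.mul_le_mul (Nat.mul_le_mul_left _ h1) h2
      _ = Cst * 2^e * (4*ℓ+1) * n^(e+1) := by ring
  have hcardC : (C.card : ℝ) ≤ ((Cst * 2^e * (4*ℓ+1) : ℕ) : ℝ) * (n : ℝ)^(2^(ℓ-1)+1) := by
    have h1 : C.card ≤ Cst * 2^e * (4*ℓ+1) * n^(e+1) := le_trans hCt htb
    have h2 : (C.card : ℝ) ≤ ((Cst * 2^e * (4*ℓ+1) * n^(e+1) : ℕ) : ℝ) := by exact_mod_cast h1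
    calc (C.card : ℝ) ≤ ((Cst * 2^e * (4*ℓ+1) * n^(e+1) : ℕ) : ℝ) := h2
      _ = ((Cst * 2^e * (4*ℓ+1) : ℕ) : ℝ) * (n : ℝ)^(2^(ℓ-1)+1) := by
          rw [he]
          push_cast
          ring
  refine ⟨⟨C, hCode, hcardC⟩, ?_⟩
  have hMid : Mid n r ℓ ≤ C.card := Nat.sInf_le ⟨C, hCode, rfl⟩
  calc (Mid n r ℓ : ℝ) ≤ (C.card : ℝ) := by exact_mod_cast hMid
    _ ≤ _ := hcardC
end

section
/- Let ℓ ≥ 1 be a fixed integer. For every ε > 0 there exist a constant c > 0 and n₀ such that for every n ≥ n₀, every ℓ+1 words x, y₁, …, y_ℓ ∈ 𝔽ⁿ with yᵢ ≠ x for i = 1, …, ℓ, and every integer r with 0 ≤ r ≤ (1/2 − ε)·n, there exist at least c·binom(n,r) words z ∈ 𝔽ⁿ with d(z,x) = r and d(z,yᵢ) > r for all i = 1, …, ℓ. -/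
open Finset

variable {α : Type*} [DecidableEq α]

/-- number of r-subsets of Ω containing a fixed U -/
lemma aux_card_supersets (Ω U : Finset α) (hU : U ⊆ Ω) {r : ℕ} (h : U.card ≤ r) :
    ((Ω.powersetCard r).filter (fun F => U ⊆ F)).card
      = (Ω.card - U.card).choose (r - U.card) := by
  rw [← Finset.card_sdiff_of_subset hU, ← Finset.card_powersetCard (r - U.card) (Ω \ U)]
  apply Finset.card_bij' (fun F _ => F \ U) (fun G _ => G ∪ U)
  · intro F hF
    simp only [mem_filter, mem_powersetCard] at hF
    simp only [mem_powersetCard]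
    refine ⟨sdiff_subset_sdiff hF.1.1 le_rfl, ?_⟩
    rw [card_sdiff_of_subset hF.2, hF.1.2]
  · intro G hG
    simp only [mem_powersetCard] at hG
    simp only [mem_filter, mem_powersetCard]
    have hdisj : Disjoint G U := disjoint_of_subset_left hG.1 sdiff_disjoint
    refine ⟨⟨union_subset (hG.1.trans sdiff_subset) hU, ?_⟩, subset_union_right⟩
    rw [card_union_of_disjoint hdisj, hG.2]
    omega
  · intro F hF
    simp only [mem_filter, mem_powersetCard] at hF
    exact sdiff_union_of_subset hF.2
  · intro G hG
    simp only [mem_powersetCard] at hG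
    have hdisj : Disjoint G U := disjoint_of_subset_left hG.1 sdiff_disjoint
    exact union_sdiff_cancel_right hdisj

/-- double counting: sum over r-subsets F of Ω of choose(|F∩A|, a) -/
lemma aux_double_count (Ω A : Finset α) (hA : A ⊆ Ω) {a r : ℕ} (har : a ≤ r) :
    ∑ F ∈ Ω.powersetCard r, ((F ∩ A).card.choose a)
      = A.card.choose a * (Ω.card - a).choose (r - a) := by
  have step1 : ∀ F ∈ Ω.powersetCard r,
      ((F ∩ A).card.choose a) = ((A.powersetCard a).filter (fun U => U ⊆ F)).card := by
    intro F _
    rw [← Finset.card_powersetCard a (F ∩ A)]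
    congr 1
    ext U
    simp only [mem_powersetCard, mem_filter, subset_inter_iff]
    tauto
  rw [Finset.sum_congr rfl step1]
  have swap : ∑ F ∈ Ω.powersetCard r, ((A.powersetCard a).filter (fun U => U ⊆ F)).card
      = ∑ U ∈ A.powersetCard a, ((Ω.powersetCard r).filter (fun F => U ⊆ F)).card := by
    simp only [Finset.card_filter]
    rw [Finset.sum_comm]
  rw [swap]
  have : ∀ U ∈ A.powersetCard a,
      ((Ω.powersetCard r).filter (fun F => U ⊆ F)).card = (Ω.card - a).choose (r - a) := by
    intro U hU
    rw [mem_powersetCard] at hU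
    rw [aux_card_supersets Ω U (hU.1.trans hA) (hU.2 ▸ har), hU.2]
  rw [Finset.sum_congr rfl this, Finset.sum_const, Finset.card_powersetCard, smul_eq_mul]

/-- halving: removing q elements costs at most a factor 2^q -/
lemma aux_halving : ∀ (q M r : ℕ), 2 * r + q ≤ M → M.choose r ≤ 2 ^ q * (M - q).choose r := by
  intro q
  induction q with
  | zero => intro M r h; simp
  | succ q ih =>
    intro M r h
    have hM : 1 ≤ M := by omega
    have hstep : M.choose r ≤ 2 * (M - 1).choose r := by
      rcases Nat.eq_zero_or_pos r with hr | hr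
      · subst hr; simp
      · obtain ⟨M', rfl⟩ : ∃ M', M = M' + 1 := ⟨M - 1, by omega⟩
        obtain ⟨r', rfl⟩ : ∃ r', r = r' + 1 := ⟨r - 1, by omega⟩
        rw [Nat.choose_succ_succ]
        have hmono : M'.choose r' ≤ M'.choose (r' + 1) :=
          Nat.choose_le_succ_of_lt_half_left (by omega)
        simp only [Nat.add_sub_cancel, Nat.succ_eq_add_one]
        omega
    calc M.choose r ≤ 2 * (M - 1).choose r := hstep
      _ ≤ 2 * (2 ^ q * (M - 1 - q).choose r) := by
          have := ih (M - 1) r (by omega)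
          omega
      _ = 2 ^ (q + 1) * (M - (q + 1)).choose r := by
          rw [pow_succ, Nat.sub_sub, Nat.add_comm 1 q]
          ring

lemma aux_term (e u a r m j : ℝ) (he : 0 < e) (he2 : e ≤ 1/8)
    (hj0 : 0 ≤ j) (hja : j ≤ a - 1) (hau : a ≤ u) (hur : u ≤ r) (hrm : r ≤ m)
    (hr : r ≤ (1/2 - e) * m) (ha1 : a - 1 ≤ e * u / 2) :
    (2*u - j) * (r - j) ≤ (1 - e) * ((u - j) * (m - j)) := by
  have h1 : r - j ≤ (1/2 - e) * (m - j) := by nlinarith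
  have h2 : (2*u - j) * (u - a + 1) ≤ 2*u * (u - j) := by
    nlinarith [mul_nonneg (sub_nonneg.2 (by linarith : j ≤ u)) (by linarith : (0:ℝ) ≤ a - 1 - j),
      mul_nonneg (by linarith : (0:ℝ) ≤ u - j) (by linarith : (0:ℝ) ≤ a - 1)]
  have h3 : (1 - 2*e) * u ≤ (1 - e) * (u - a + 1) := by nlinarith
  have hpos : (0:ℝ) < u - a + 1 := by linarith
  have hmj : (0:ℝ) ≤ m - j := by linarith
  have huj : (0:ℝ) ≤ u - j := by linarith
  have h2u : (0:ℝ) ≤ 2*u - j := by linarith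
  rw [← mul_le_mul_iff_of_pos_right hpos]
  calc (2*u - j) * (r - j) * (u - a + 1)
      ≤ (2*u - j) * ((1/2 - e) * (m - j)) * (u - a + 1) := by
        apply mul_le_mul_of_nonneg_right (mul_le_mul_of_nonneg_left h1 h2u) hpos.le
    _ = ((2*u - j) * (u - a + 1)) * ((1/2 - e) * (m - j)) := by ring
    _ ≤ (2*u * (u - j)) * ((1/2 - e) * (m - j)) := by
        apply mul_le_mul_of_nonneg_right h2 (by nlinarith)
    _ = ((1 - 2*e) * u) * ((u - j) * (m - j)) := by ring
    _ ≤ ((1 - e) * (u - a + 1)) * ((u - j) * (m - j)) := by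
        apply mul_le_mul_of_nonneg_right h3 (mul_nonneg huj hmj)
    _ = (1 - e) * ((u - j) * (m - j)) * (u - a + 1) := by ring

lemma aux_choose_bound (e : ℝ) (he : 0 < e) (he2 : e ≤ 1/8) {t' u a r m : ℕ}
    (hau : a ≤ u) (hur : u ≤ r) (hrm : r ≤ m) (ht' : t' ≤ 2*u)
    (hr : (r:ℝ) ≤ (1/2 - e) * m) (ha1 : (a:ℝ) - 1 ≤ e * u / 2) :
    (t'.choose a : ℝ) * (r.choose a) ≤ (1-e)^a * ((u.choose a) * (m.choose a)) := by
  have key : (t'.descFactorial a : ℝ) * (r.descFactorial a)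
      ≤ (1-e)^a * ((u.descFactorial a) * (m.descFactorial a)) := by
    rw [Nat.descFactorial_eq_prod_range t' a, Nat.descFactorial_eq_prod_range r a,
      Nat.descFactorial_eq_prod_range u a, Nat.descFactorial_eq_prod_range m a]
    rw [Nat.cast_prod, Nat.cast_prod, Nat.cast_prod, Nat.cast_prod,
      ← Finset.prod_mul_distrib, ← Finset.prod_mul_distrib,
      show (1-e)^a = ∏ _i ∈ Finset.range a, (1-e) by simp, ← Finset.prod_mul_distrib]
    apply Finset.prod_le_prod
    · intro i _; positivity
    · intro i hi
      rw [Finset.mem_range] at hi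
      have hiu : i ≤ u := le_of_lt (lt_of_lt_of_le hi hau)
      have hir : i ≤ r := hiu.trans hur
      have him : i ≤ m := hir.trans hrm
      rw [Nat.cast_sub hir, Nat.cast_sub hiu, Nat.cast_sub him]
      have hcast1 : ((t' - i : ℕ) : ℝ) ≤ 2*(u:ℝ) - i := by
        have h1 : t' - i ≤ 2*u - i := Nat.sub_le_sub_right ht' i
        have h2 : ((2*u - i : ℕ) : ℝ) = 2*(u:ℝ) - i := by
          rw [Nat.cast_sub (by omega)]; push_cast; ring
        calc ((t' - i : ℕ):ℝ) ≤ ((2*u - i : ℕ):ℝ) := Nat.cast_le.2 h1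
          _ = 2*(u:ℝ) - i := h2
      have hterm := aux_term e u a r m i he he2 (Nat.cast_nonneg i)
        (by have h : ((i+1:ℕ):ℝ) ≤ a := Nat.cast_le.2 hi; push_cast at h; linarith)
        (Nat.cast_le.2 hau) (Nat.cast_le.2 hur) (Nat.cast_le.2 hrm) hr ha1
      calc ((t' - i : ℕ):ℝ) * ((r:ℝ) - i)
          ≤ (2*(u:ℝ) - i) * ((r:ℝ) - i) := by
            apply mul_le_mul_of_nonneg_right hcast1
            have : (i:ℝ) ≤ r := Nat.cast_le.2 hir
            linarith
        _ ≤ (1 - e) * (((u:ℝ) - i) * ((m:ℝ) - i)) := hterm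
  have hfac : (0:ℝ) < (a.factorial : ℝ) := by exact_mod_cast a.factorial_pos
  have hre : ∀ x : ℕ, (x.descFactorial a : ℝ) = (a.factorial : ℝ) * (x.choose a : ℝ) := by
    intro x; exact_mod_cast congrArg Nat.cast (Nat.descFactorial_eq_factorial_mul_choose x a)
  rw [hre, hre, hre, hre] at key
  have hpos2 : (0:ℝ) < ((a.factorial:ℝ))^2 := by positivity
  have h2 : ((a.factorial:ℝ)^2) * ((t'.choose a:ℝ) * (r.choose a))
      ≤ ((a.factorial:ℝ)^2) * ((1-e)^a * ((u.choose a) * (m.choose a))) := by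
    ring_nf
    ring_nf at key
    linarith
  exact le_of_mul_le_mul_left h2 hpos2


set_option maxHeartbeats 2000000 in
/-- For fixed `ℓ ≥ 1` and every `ε > 0` there are `c > 0` and `n₀` such that
for all `n ≥ n₀`, all words `x, y₁, …, y_ℓ` with `yᵢ ≠ x`, and all `r ≤ (1/2 - ε)n`,
at least `c·binom(n,r)` words `z` satisfy `d(z,x) = r` and `d(z,yᵢ) > r` for all `i`. -/
theorem many_words_at_exact_distance (ℓ : ℕ) (hℓ : 1 ≤ ℓ) (ε : ℝ) (hε : 0 < ε) :
    ∃ (c : ℝ), 0 < c ∧ ∃ n₀ : ℕ, ∀ n : ℕ, n₀ ≤ n →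
      ∀ (x : Fin n → Bool) (y : Fin ℓ → (Fin n → Bool)), (∀ i, y i ≠ x) →
      ∀ r : ℕ, (r : ℝ) ≤ (1 / 2 - ε) * n →
        c * (n.choose r) ≤
          ((Finset.univ.filter (fun z : Fin n → Bool =>
            hammingDist z x = r ∧ ∀ i, r < hammingDist z (y i))).card : ℝ) := by
  set e : ℝ := min ε (1/4) / 2 with hedef
  have hepos : 0 < e := by
    have : 0 < min ε (1/4) := lt_min hε (by norm_num)
    positivity
  have hele : e ≤ 1/8 := by
    have : min ε (1/4) ≤ 1/4 := min_le_right _ _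
    rw [hedef]; linarith
  have heε : 2 * e ≤ ε := by
    have : min ε (1/4) ≤ ε := min_le_left _ _
    rw [hedef]; linarith
  obtain ⟨K, hK⟩ : ∃ K : ℕ, (1-e)^K < 1/(2*ℓ) :=
    exists_pow_lt_of_lt_one (by positivity) (by linarith)
  set T : ℕ := ⌈(4*K)/e⌉₊ + 1 with hTdef
  set s : ℕ := ℓ * T with hsdef
  refine ⟨(1/2)^(s+1), by positivity, ⌈(s+1)/e⌉₊ + 1, ?_⟩
  intro n hn x y hy r hr
  -- basic numeric facts
  have hs1 : (s:ℝ) + 1 ≤ e * n := by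
    have h1 : ((s:ℝ)+1)/e ≤ n := by
      have := Nat.ceil_le.mp (le_trans (Nat.le_add_right _ 1) hn)
      push_cast at this ⊢
      exact this
    calc (s:ℝ) + 1 = ((s:ℝ)+1)/e * e := by field_simp
      _ ≤ n * e := by apply mul_le_mul_of_nonneg_right h1 hepos.le
      _ = e * n := by ring
  have hrn : (r:ℝ) ≤ (1/2 - 2*e)*n := by
    have hn0 : (0:ℝ) ≤ n := Nat.cast_nonneg n
    nlinarith
  have h2rs : 2*r + s + 1 ≤ n := by
    have : (2*(r:ℝ) + s + 1 : ℝ) ≤ n := by nlinarith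
    exact_mod_cast this
  -- difference sets
  set D : Fin ℓ → Finset (Fin n) := fun i => univ.filter (fun j => y i j ≠ x j) with hDdef
  set t : Fin ℓ → ℕ := fun i => (D i).card with htdef
  have ht1 : ∀ i, 1 ≤ t i := by
    intro i
    rw [Nat.one_le_iff_ne_zero, htdef]
    simp only [ne_eq, Finset.card_eq_zero]
    intro hcon
    apply hy i
    funext j
    by_contra hj
    have : j ∈ D i := by rw [hDdef]; simp [hj]
    rw [hDdef] at this hcon
    rw [hcon] at this
    exact absurd this (Finset.notMem_empty j)
  set Dbig : Finset (Fin n) := (univ.filter (fun i => t i ≤ T)).biUnion D with hDbigdef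
  set s' : ℕ := Dbig.card with hs'def
  have hs's : s' ≤ s := by
    rw [hs'def, hDbigdef]
    calc ((univ.filter (fun i => t i ≤ T)).biUnion D).card
        ≤ ∑ i ∈ univ.filter (fun i => t i ≤ T), (D i).card := Finset.card_biUnion_le
      _ ≤ ∑ _i ∈ univ.filter (fun i => t i ≤ T), T := by
          apply Finset.sum_le_sum; intro i hi
          exact (Finset.mem_filter.mp hi).2
      _ = (univ.filter (fun i => t i ≤ T)).card * T := by rw [Finset.sum_const, smul_eq_mul]
      _ ≤ ℓ * T := by
          apply Nat.mul_le_mul_right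
          calc (univ.filter (fun i => t i ≤ T)).card ≤ (univ : Finset (Fin ℓ)).card :=
                Finset.card_filter_le _ _
            _ = ℓ := by simp
  set Ω : Finset (Fin n) := univ \ Dbig with hΩdef
  set m : ℕ := Ω.card with hmdef
  have hmeq : m = n - s' := by
    rw [hmdef, hΩdef, Finset.card_sdiff_of_subset (Finset.subset_univ _), hs'def]
    simp
  have hs'n : s' ≤ n := by omega
  have hrm : r ≤ m := by omega
  have hmreal : (m:ℝ) = (n:ℝ) - s' := by rw [hmeq]; push_cast [hs'n]; ring
  have hrme : (r:ℝ) ≤ (1/2 - e) * m := by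
    have hs's' : (s':ℝ) ≤ s := Nat.cast_le.2 hs's
    rw [hmreal]
    nlinarith
  -- good sets
  set P : Finset (Finset (Fin n)) := Ω.powersetCard r with hPdef
  set G : Finset (Finset (Fin n)) :=
    P.filter (fun F => ∀ i : Fin ℓ, T < t i → 2 * (F ∩ D i).card < t i) with hGdef
  set L : Finset (Fin ℓ) := univ.filter (fun i => T < t i) with hLdef
  set Bad : Fin ℓ → Finset (Finset (Fin n)) :=
    fun i => P.filter (fun F => t i ≤ 2 * (F ∩ D i).card) with hBaddef
  have hPcard : P.card = m.choose r := by rw [hPdef, Finset.card_powersetCard, hmdef]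
  -- each bad set is small
  have hBadBound : ∀ i ∈ L, ((Bad i).card : ℝ) ≤ (1-e)^K * (m.choose r) := by
    intro i hiL
    have hTt : T < t i := (Finset.mem_filter.mp hiL).2
    set u : ℕ := (t i + 1) / 2 with hudef
    have h2u : t i ≤ 2 * u := by omega
    have hu2 : 2 * u ≤ t i + 1 := by omega
    have hu1 : 1 ≤ u := by omega
    set a : ℕ := ⌈(e/2) * u⌉₊ with hadef
    have hau : a ≤ u := by
      rw [hadef, Nat.ceil_le]
      calc (e/2) * u ≤ (1:ℝ) * u := by
            apply mul_le_mul_of_nonneg_right (by linarith) (Nat.cast_nonneg u)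
        _ = u := by ring
    have haK : K ≤ a := by
      have h1 : (K:ℝ) ≤ (e/2) * u := by
        have hT4K : (4*(K:ℝ))/e ≤ T := by
          rw [hTdef]
          push_cast
          calc (4*(K:ℝ))/e ≤ ⌈(4*(K:ℝ))/e⌉₊ := Nat.le_ceil _
            _ ≤ ⌈(4*(K:ℝ))/e⌉₊ + 1 := by linarith
        have hut : (2:ℝ) * u ≥ t i := by exact_mod_cast h2u
        have htT : (T:ℝ) < t i := by exact_mod_cast hTt
        have h4 : (4*(K:ℝ))/e ≤ 2*u := by linarith
        have h5 : 4*(K:ℝ) ≤ 2*u*e := by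
          have := (div_le_iff₀ hepos).1 h4
          linarith
        linarith
      have h2 : (K:ℝ) ≤ a := h1.trans (Nat.le_ceil _)
      exact_mod_cast h2
    by_cases hur : u ≤ r
    · -- main case
      have har : a ≤ r := hau.trans hur
      have ha1 : (a:ℝ) - 1 ≤ e * u / 2 := by
        have := Nat.ceil_lt_add_one (by positivity : (0:ℝ) ≤ (e/2) * u)
        rw [← hadef] at this
        linarith
      set A : Finset (Fin n) := D i \ Dbig with hAdef
      have hAΩ : A ⊆ Ω := by
        rw [hAdef, hΩdef]
        exact sdiff_subset_sdiff (Finset.subset_univ _) le_rfl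
      set t' : ℕ := A.card with ht'def
      have ht'2u : t' ≤ 2 * u := by
        have : t' ≤ t i := by
          rw [ht'def, hAdef, htdef]
          exact Finset.card_le_card sdiff_subset
        omega
      have hsum := aux_double_count Ω A hAΩ har
      rw [← hmdef, ← ht'def] at hsum
      have hlow : (Bad i).card * u.choose a ≤ ∑ F ∈ P, ((F ∩ A).card.choose a) := by
        have hsub : Bad i ⊆ P := Finset.filter_subset _ _
        calc (Bad i).card * u.choose a = ∑ _F ∈ Bad i, u.choose a := by
              rw [Finset.sum_const, smul_eq_mul]
          _ ≤ ∑ F ∈ Bad i, ((F ∩ A).card.choose a) := by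
              apply Finset.sum_le_sum
              intro F hF
              apply Nat.choose_le_choose
              have hFP := hsub hF
              rw [hPdef, Finset.mem_powersetCard] at hFP
              have hcond := (Finset.mem_filter.mp hF).2
              have hFA : F ∩ A = F ∩ D i := by
                rw [hAdef]
                ext j
                simp only [Finset.mem_inter, Finset.mem_sdiff]
                constructor
                · tauto
                · intro ⟨hjF, hjD⟩
                  refine ⟨hjF, hjD, ?_⟩
                  have := hFP.1 hjF
                  rw [hΩdef, Finset.mem_sdiff] at this
                  exact this.2
              rw [hFA]
              omega
          _ ≤ ∑ F ∈ P, ((F ∩ A).card.choose a) := Finset.sum_le_sum_of_subset hsub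
      rw [hsum] at hlow
      -- now real arithmetic
      have hreal := aux_choose_bound e hepos hele hau hur hrm ht'2u hrme ha1
      have hCua : 0 < u.choose a := Nat.choose_pos hau
      have hCma : 0 < m.choose a := Nat.choose_pos (har.trans hrm)
      have hid : m.choose r * r.choose a = m.choose a * (m-a).choose (r-a) :=
        Nat.choose_mul har
      have hlowR : ((Bad i).card : ℝ) * (u.choose a) ≤ (t'.choose a) * ((m-a).choose (r-a)) := by
        exact_mod_cast hlow
      have hidR : ((m.choose r : ℕ) : ℝ) * (r.choose a) = (m.choose a) * ((m-a).choose (r-a)) := by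
        exact_mod_cast hid
      have hX : (0:ℝ) < (u.choose a : ℝ) * (m.choose a) := by
        exact mul_pos (by exact_mod_cast hCua) (by exact_mod_cast hCma)
      have hchain : ((Bad i).card : ℝ) * ((u.choose a : ℝ) * (m.choose a))
          ≤ ((1-e)^a * (m.choose r)) * ((u.choose a : ℝ) * (m.choose a)) := by
        calc ((Bad i).card : ℝ) * ((u.choose a : ℝ) * (m.choose a))
            = (((Bad i).card : ℝ) * (u.choose a)) * (m.choose a) := by ring
          _ ≤ ((t'.choose a : ℝ) * ((m-a).choose (r-a))) * (m.choose a) := by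
              apply mul_le_mul_of_nonneg_right hlowR (Nat.cast_nonneg _)
          _ = ((m.choose a : ℝ) * ((m-a).choose (r-a))) * (t'.choose a) := by ring
          _ = (((m.choose r : ℕ) : ℝ) * (r.choose a)) * (t'.choose a) := by rw [hidR]
          _ = ((m.choose r : ℕ) : ℝ) * ((t'.choose a) * (r.choose a)) := by ring
          _ ≤ ((m.choose r : ℕ) : ℝ) * ((1-e)^a * ((u.choose a) * (m.choose a))) := by
              apply mul_le_mul_of_nonneg_left hreal (Nat.cast_nonneg _)
          _ = ((1-e)^a * (m.choose r)) * ((u.choose a : ℝ) * (m.choose a)) := by ring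
      have hB : ((Bad i).card : ℝ) ≤ (1-e)^a * (m.choose r) :=
        le_of_mul_le_mul_right hchain hX
      calc ((Bad i).card : ℝ) ≤ (1-e)^a * (m.choose r) := hB
        _ ≤ (1-e)^K * (m.choose r) := by
            apply mul_le_mul_of_nonneg_right _ (Nat.cast_nonneg _)
            exact pow_le_pow_of_le_one (by linarith) (by linarith) haK
    · -- r < u : Bad i is empty
      have : Bad i = ∅ := by
        rw [hBaddef, Finset.filter_eq_empty_iff]
        intro F hF
        rw [hPdef, Finset.mem_powersetCard] at hF
        have hk : (F ∩ D i).card ≤ r := hF.2 ▸ Finset.card_le_card Finset.inter_subset_left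
        omega
      rw [this]
      simp only [Finset.card_empty, Nat.cast_zero]
      exact mul_nonneg (pow_nonneg (by linarith) K) (Nat.cast_nonneg _)
  -- G is large
  have hGbig : ((m.choose r : ℕ) : ℝ) / 2 ≤ G.card := by
    have hsplit : G.card + (P.filter (fun F =>
        ¬ (∀ i : Fin ℓ, T < t i → 2 * (F ∩ D i).card < t i))).card = P.card := by
      rw [hGdef]
      exact Finset.card_filter_add_card_filter_not _
    set Pnot := P.filter (fun F =>
        ¬ (∀ i : Fin ℓ, T < t i → 2 * (F ∩ D i).card < t i)) with hPnotdef
    have hPnotsub : Pnot ⊆ L.biUnion Bad := by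
      intro F hF
      rw [hPnotdef, Finset.mem_filter] at hF
      push_neg at hF
      obtain ⟨i, hTi, hki⟩ := hF.2
      rw [Finset.mem_biUnion]
      exact ⟨i, by rw [hLdef]; simp [hTi], by rw [hBaddef]; simp [hF.1]; omega⟩
    have hPnotR : (Pnot.card : ℝ) ≤ ((m.choose r : ℕ) : ℝ) / 2 := by
      have h1 : (Pnot.card : ℕ) ≤ ∑ i ∈ L, (Bad i).card :=
        le_trans (Finset.card_le_card hPnotsub) Finset.card_biUnion_le
      have h2 : ((Pnot.card : ℕ) : ℝ) ≤ ∑ i ∈ L, ((Bad i).card : ℝ) := by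
        exact_mod_cast h1
      have h3 : ∑ i ∈ L, ((Bad i).card : ℝ) ≤ ∑ _i ∈ L, (1-e)^K * (m.choose r) :=
        Finset.sum_le_sum hBadBound
      have h4 : ∑ _i ∈ L, ((1-e)^K * ((m.choose r : ℕ):ℝ)) = L.card * ((1-e)^K * (m.choose r)) := by
        rw [Finset.sum_const, nsmul_eq_mul]
      have hLl : (L.card : ℝ) ≤ ℓ := by
        have : L.card ≤ ℓ := le_trans (Finset.card_filter_le _ _) (by simp)
        exact_mod_cast this
      have h5 : (L.card : ℝ) * ((1-e)^K * (m.choose r)) ≤ ℓ * ((1-e)^K * (m.choose r)) := by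
        apply mul_le_mul_of_nonneg_right hLl
        exact mul_nonneg (pow_nonneg (by linarith) K) (Nat.cast_nonneg _)
      have h6 : (ℓ:ℝ) * ((1-e)^K * (m.choose r)) ≤ ((m.choose r : ℕ):ℝ) / 2 := by
        have hℓpos : (0:ℝ) < ℓ := by exact_mod_cast hℓ
        have : (ℓ:ℝ) * (1-e)^K ≤ 1/2 := by
          have h7 : (ℓ:ℝ) * (1-e)^K ≤ ℓ * (1/(2*ℓ)) := by
            apply mul_le_mul_of_nonneg_left hK.le hℓpos.le
          have h8 : (ℓ:ℝ) * (1/(2*ℓ)) = 1/2 := by field_simp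
          linarith
        calc (ℓ:ℝ) * ((1-e)^K * (m.choose r)) = ((ℓ:ℝ) * (1-e)^K) * (m.choose r) := by ring
          _ ≤ (1/2) * (m.choose r) := by
              apply mul_le_mul_of_nonneg_right this (Nat.cast_nonneg _)
          _ = ((m.choose r : ℕ):ℝ) / 2 := by ring
      linarith
    have hPG : (P.card : ℝ) = G.card + Pnot.card := by exact_mod_cast hsplit.symm
    rw [hPcard] at hPG
    linarith
  -- injection into the target set
  set zf : Finset (Fin n) → (Fin n → Bool) := fun F j => if j ∈ F then !(x j) else x j with hzfdef
  have hfilter : ∀ F : Finset (Fin n), univ.filter (fun j => zf F j ≠ x j) = F := by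
    intro F
    ext j
    by_cases hj : j ∈ F <;> simp [hzfdef, hj]
  have hdx : ∀ F : Finset (Fin n), hammingDist (zf F) x = F.card := by
    intro F
    show (univ.filter (fun j => zf F j ≠ x j)).card = F.card
    rw [hfilter]
  have hdy : ∀ (F : Finset (Fin n)) (i : Fin ℓ),
      hammingDist (zf F) (y i) = (F \ D i).card + (D i \ F).card := by
    intro F i
    show (univ.filter (fun j => zf F j ≠ y i j)).card = _
    rw [← Finset.card_union_of_disjoint disjoint_sdiff_sdiff]
    congr 1
    ext j
    have hDj : (j ∈ D i) ↔ (y i j ≠ x j) := by rw [hDdef]; simp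
    by_cases hjF : j ∈ F <;>
      cases hx : x j <;> cases hyij : y i j <;>
      simp [hzfdef, hjF, hDj, hx, hyij, Finset.mem_sdiff, Finset.mem_union]
  set Target := univ.filter (fun z : Fin n → Bool =>
      hammingDist z x = r ∧ ∀ i, r < hammingDist z (y i)) with hTargetdef
  have hmaps : ∀ F ∈ G, zf F ∈ Target := by
    intro F hF
    rw [hGdef, Finset.mem_filter] at hF
    obtain ⟨hFP, hFcond⟩ := hF
    rw [hPdef, Finset.mem_powersetCard] at hFP
    obtain ⟨hFΩ, hFr⟩ := hFP
    have hFDb : ∀ j ∈ F, j ∉ Dbig := by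
      intro j hj
      have := hFΩ hj
      rw [hΩdef, Finset.mem_sdiff] at this
      exact this.2
    have hkey : ∀ i : Fin ℓ, 2 * (F ∩ D i).card < t i := by
      intro i
      by_cases hTi : T < t i
      · exact hFcond i hTi
      · have hemp : F ∩ D i = ∅ := by
          rw [Finset.eq_empty_iff_forall_notMem]
          intro j hj
          rw [Finset.mem_inter] at hj
          apply hFDb j hj.1
          rw [hDbigdef]
          exact Finset.subset_biUnion_of_mem D (by simp; omega) hj.2
        rw [hemp]
        have := ht1 i
        simp
        omega
    rw [hTargetdef, Finset.mem_filter]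
    refine ⟨Finset.mem_univ _, by rw [hdx]; exact hFr, ?_⟩
    intro i
    rw [hdy]
    have h1 : (F \ D i).card + (F ∩ D i).card = F.card := Finset.card_sdiff_add_card_inter F (D i)
    have h2 : (D i \ F).card + (D i ∩ F).card = (D i).card := Finset.card_sdiff_add_card_inter (D i) F
    have h3 : (D i ∩ F).card = (F ∩ D i).card := by rw [Finset.inter_comm]
    have hki : 2 * (F ∩ D i).card < (D i).card := by
      have := hkey i
      rw [htdef] at this
      simpa using this
    omega
  have hinj : Set.InjOn zf G := by
    intro F hF F' hF' heq
    ext j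
    have h1 := hfilter F
    have h2 := hfilter F'
    rw [← h1, ← h2, heq]
  have hcard : G.card ≤ Target.card := Finset.card_le_card_of_injOn zf hmaps hinj
  -- final computation
  have hhalf := aux_halving s' n r (by omega)
  rw [← hmeq] at hhalf
  have hhalfR : ((n.choose r : ℕ) : ℝ) ≤ 2^s' * (m.choose r) := by exact_mod_cast hhalf
  have h2s : (2:ℝ)^s' ≤ 2^s := by
    apply pow_le_pow_right₀ (by norm_num) hs's
  have hTR : ((m.choose r : ℕ) : ℝ) / 2 ≤ Target.card := by
    have : (G.card : ℝ) ≤ Target.card := by exact_mod_cast hcard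
    linarith
  have hcnonneg : (0:ℝ) ≤ ((m.choose r : ℕ) : ℝ) := Nat.cast_nonneg _
  calc ((1:ℝ)/2)^(s+1) * (n.choose r)
      ≤ (1/2)^(s+1) * (2^s' * (m.choose r)) := by
        apply mul_le_mul_of_nonneg_left hhalfR (by positivity)
    _ ≤ (1/2)^(s+1) * (2^s * (m.choose r)) := by
        apply mul_le_mul_of_nonneg_left _ (by positivity)
        apply mul_le_mul_of_nonneg_right h2s hcnonneg
    _ = ((m.choose r : ℕ) : ℝ) / 2 := by
        rw [pow_succ]
        have : ((1:ℝ)/2)^s * 2^s = 1 := by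
          rw [← mul_pow]
          norm_num
        field_simp
        have h' := congrArg (fun t => t * ((m.choose r : ℕ) : ℝ)) this
        simp only [one_mul] at h'
        linarith
    _ ≤ Target.card := hTR
end

section
/- Let ℓ ≥ 1 be a fixed integer. For every integer L ≥ 2^ℓ there exist a constant c > 0 and n₀ such that for every n ≥ n₀ and every ℓ+1 words x, y₁, …, y_ℓ ∈ 𝔽ⁿ with yᵢ ≠ x for i = 1, …, ℓ, setting r = ⌊n/2⌋ − L, there exist at least c·n^{−2^{ℓ−1}}·2ⁿ words z ∈ 𝔽ⁿ with d(z,x) = r and d(z,yᵢ) > r for all i = 1, …, ℓ. -/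
open Finset

lemma sq_le_helper (u v : ℝ) (hu : 0 ≤ u) (hv : 0 ≤ v) (h : u^2 ≤ v^2) : u ≤ v := by
  calc u = Real.sqrt (u^2) := (Real.sqrt_sq hu).symm
    _ ≤ Real.sqrt (v^2) := Real.sqrt_le_sqrt h
    _ = v := Real.sqrt_sq hv

lemma N1 : ∀ m : ℕ, 1 ≤ m → 16 ^ m ≤ 4 * m * (Nat.centralBinom m)^2 := by
  intro m hm
  induction m with
  | zero => omega
  | succ m ih =>
    rcases Nat.eq_or_lt_of_le hm with h | h
    · simp [← h, Nat.centralBinom]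
    · have hm1 : 1 ≤ m := by omega
      have IH := ih hm1
      have key := Nat.succ_mul_centralBinom_succ m
      have h2 : 16 ^ (m+1) * (m+1) ≤ 4 * (m+1) * (Nat.centralBinom (m+1))^2 * (m+1) := by
        have e : 4 * (m+1) * (Nat.centralBinom (m+1))^2 * (m+1) =
            4 * ((m+1) * Nat.centralBinom (m+1))^2 := by ring
        rw [e, key]
        have h3 : 16 ^ m * (m + 1) ≤ (2*m+1)^2 * (Nat.centralBinom m)^2 := by
          calc 16^m * (m+1) ≤ 4 * m * (Nat.centralBinom m)^2 * (m+1) :=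
                Nat.mul_le_mul_right _ IH
            _ ≤ (2*m+1)^2 * (Nat.centralBinom m)^2 := by nlinarith [sq_nonneg (Nat.centralBinom m)]
        calc 16 ^ (m+1) * (m+1) = 16 * (16^m * (m+1)) := by ring
          _ ≤ 16 * ((2*m+1)^2 * (Nat.centralBinom m)^2) := Nat.mul_le_mul_left _ h3
          _ = 4 * (2 * (2*m+1) * Nat.centralBinom m)^2 := by ring
      exact Nat.le_of_mul_le_mul_right h2 (by omega)

lemma cbR (m : ℕ) (hm : 1 ≤ m) : (4:ℝ)^m ≤ 2 * Real.sqrt m * (Nat.centralBinom m) := by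
  have h : (16:ℝ)^m ≤ 4 * m * (Nat.centralBinom m)^2 := by exact_mod_cast N1 m hm
  have hs : Real.sqrt m ^ 2 = (m:ℝ) := Real.sq_sqrt (by positivity)
  apply sq_le_helper _ _ (by positivity) (by positivity)
  calc ((4:ℝ)^m)^2 = 16^m := by rw [← pow_mul, pow_mul']; norm_num
    _ ≤ 4 * m * (Nat.centralBinom m)^2 := h
    _ = (2 * Real.sqrt m * (Nat.centralBinom m))^2 := by
        rw [mul_pow, mul_pow, hs]; ring

lemma R1 (a : ℕ) : (2:ℝ)^a ≤ 2 * Real.sqrt (a+1) * (Nat.choose a (a/2)) := by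
  rcases Nat.even_or_odd a with ⟨m, hm⟩ | ⟨m, hm⟩
  · subst hm
    rcases Nat.eq_zero_or_pos m with rfl | hm1
    · norm_num
    have hd : (m + m) / 2 = m := by omega
    rw [hd]
    have hcb : Nat.choose (m+m) m = Nat.centralBinom m := by
      rw [Nat.centralBinom]; congr 1; omega
    rw [hcb]
    have h := cbR m hm1
    have h4 : (2:ℝ)^(m+m) = 4^m := by
      rw [show m+m = 2*m by ring, pow_mul]; norm_num
    rw [h4]
    refine h.trans ?_
    have hmono : Real.sqrt m ≤ Real.sqrt ((m:ℝ)+m+1) := Real.sqrt_le_sqrt (by push_cast; linarith)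
    have hc : (0:ℝ) ≤ (Nat.centralBinom m : ℝ) := by positivity
    push_cast
    nlinarith [Real.sqrt_nonneg (m:ℝ)]
  · subst hm
    have hd : (2*m+1)/2 = m := by omega
    rw [hd]
    have hcb : 2 * Nat.choose (2*m+1) m = Nat.centralBinom (m+1) := by
      rw [Nat.centralBinom]
      have h1 : Nat.choose (2*m+1) (m+1) = Nat.choose (2*m+1) m := by
        rw [← Nat.choose_symm (by omega : m+1 ≤ 2*m+1)]
        congr 1; omega
      have h2 : Nat.choose (2*(m+1)) (m+1) = Nat.choose (2*m+1) m + Nat.choose (2*m+1) (m+1) := by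
        rw [show 2*(m+1) = (2*m+1)+1 by ring]
        exact Nat.choose_succ_succ (2*m+1) m
      omega
    have h := cbR (m+1) (by omega)
    have hcbR : (2:ℝ) * Nat.choose (2*m+1) m = Nat.centralBinom (m+1) := by exact_mod_cast hcb
    have h4 : (2:ℝ)^(2*m+1) * 2 = 4^(m+1) := by
      rw [show (4:ℝ) = 2^2 by norm_num, ← pow_mul, ← pow_succ, show 2*(m+1) = 2*m+1+1 by ring]
    have key : (2:ℝ)^(2*m+1) * 2 ≤ 2 * Real.sqrt ((m:ℝ)+1) * (2 * Nat.choose (2*m+1) m) := by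
      rw [h4, hcbR]
      have : ((m:ℝ)+1) = ((m+1 : ℕ) : ℝ) := by push_cast; ring
      rw [this]
      exact h
    have hch : (0:ℝ) ≤ (Nat.choose (2*m+1) m : ℝ) := by positivity
    have h5 : (2:ℝ)^(2*m+1) ≤ 2 * Real.sqrt ((m:ℝ)+1) * Nat.choose (2*m+1) m := by linarith
    refine h5.trans ?_
    have hmono : Real.sqrt ((m:ℝ)+1) ≤ Real.sqrt (((2*m+1:ℕ):ℝ)+1) := Real.sqrt_le_sqrt (by push_cast; linarith)
    push_cast
    push_cast at hmono
    nlinarith [Real.sqrt_nonneg ((m:ℝ)+1)]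

-- step-down lemma
lemma L2 (a k : ℕ) (h : a ≤ 5*k+4) : ∀ d : ℕ, Nat.choose a (k+d) ≤ 4^d * Nat.choose a k := by
  intro d
  induction d with
  | zero => simp
  | succ d ih =>
    have key := Nat.choose_succ_right_eq a (k+d)
    have h2 : Nat.choose a (k+d+1) * (k+d+1) ≤ 4 * Nat.choose a (k+d) * (k+d+1) := by
      rw [key]
      have : a - (k+d) ≤ 4 * (k+d+1) := by omega
      calc Nat.choose a (k+d) * (a - (k+d)) ≤ Nat.choose a (k+d) * (4*(k+d+1)) :=
            Nat.mul_le_mul_left _ this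
        _ = 4 * Nat.choose a (k+d) * (k+d+1) := by ring
    have h3 : Nat.choose a (k+d+1) ≤ 4 * Nat.choose a (k+d) := Nat.le_of_mul_le_mul_right h2 (by omega)
    calc Nat.choose a (k+(d+1)) = Nat.choose a (k+d+1) := by ring_nf
      _ ≤ 4 * Nat.choose a (k+d) := h3
      _ ≤ 4 * (4^d * Nat.choose a k) := Nat.mul_le_mul_left _ ih
      _ = 4^(d+1) * Nat.choose a k := by ring

noncomputable def epsL (L : ℕ) : ℝ := ((4:ℝ)^(L+1))⁻¹ * ((2:ℝ)^(10*(L+2)))⁻¹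

lemma epsL_pos (L : ℕ) : 0 < epsL L := by unfold epsL; positivity

lemma fiber_binom (L a k : ℕ) (h1 : 2*k ≤ a) (h2 : a ≤ 2*k + 2*L + 2) :
    epsL L * 2^a ≤ (Nat.choose a k : ℝ) * Real.sqrt (a+1) := by
  have hch1 : (1:ℝ) ≤ Nat.choose a k := by
    have : 0 < Nat.choose a k := Nat.choose_pos (by omega)
    exact_mod_cast this
  have hsq1 : (1:ℝ) ≤ Real.sqrt (a+1) := by
    have := Real.sqrt_le_sqrt (show (1:ℝ) ≤ (a:ℝ)+1 by have : (0:ℝ) ≤ a := Nat.cast_nonneg a; linarith)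
    simpa using this
  by_cases ha : a ≤ 10*(L+2)
  · have h3 : epsL L * 2^a ≤ 1 := by
      unfold epsL
      have h4 : (2:ℝ)^a ≤ 2^(10*(L+2)) := by
        apply pow_le_pow_right₀ (by norm_num) ha
      have h5 : (0:ℝ) < (4:ℝ)^(L+1) := by positivity
      have h6 : (1:ℝ) ≤ (4:ℝ)^(L+1) := one_le_pow₀ (by norm_num)
      have h7 : (0:ℝ) < (2:ℝ)^(10*(L+2)) := by positivity
      rw [mul_assoc]
      calc ((4:ℝ)^(L+1))⁻¹ * (((2:ℝ)^(10*(L+2)))⁻¹ * 2^a)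
          ≤ ((4:ℝ)^(L+1))⁻¹ * 1 := by
            apply mul_le_mul_of_nonneg_left _ (by positivity)
            rw [inv_mul_le_iff₀ h7, mul_one]; exact h4
        _ ≤ 1 := by rw [mul_one, inv_le_one_iff₀]; right; exact h6
    calc epsL L * 2^a ≤ 1 := h3
      _ ≤ (Nat.choose a k : ℝ) * Real.sqrt (a+1) := by nlinarith
  · -- large a
    set m := a/2 with hm
    have hk : k ≤ m := by omega
    set d := m - k with hd
    have hkd : k + d = m := by omega
    have hdL : d ≤ L + 1 := by omega
    have h5k : a ≤ 5*k + 4 := by omega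
    have step := L2 a k h5k d
    rw [hkd] at step
    have hR := R1 a
    have hcast : (Nat.choose a m : ℝ) ≤ 4^d * Nat.choose a k := by exact_mod_cast step
    have h4d : (4:ℝ)^d ≤ 4^(L+1) := pow_le_pow_right₀ (by norm_num) hdL
    have hsq0 : (0:ℝ) ≤ Real.sqrt (a+1) := Real.sqrt_nonneg _
    have hchain : (2:ℝ)^a ≤ 2 * 4^(L+1) * (Nat.choose a k : ℝ) * Real.sqrt (a+1) := by
      calc (2:ℝ)^a ≤ 2 * Real.sqrt (a+1) * (Nat.choose a m) := hR
        _ ≤ 2 * Real.sqrt (a+1) * (4^d * Nat.choose a k) := by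
            apply mul_le_mul_of_nonneg_left hcast (by positivity)
        _ ≤ 2 * Real.sqrt (a+1) * (4^(L+1) * Nat.choose a k) := by
            apply mul_le_mul_of_nonneg_left _ (by positivity)
            apply mul_le_mul_of_nonneg_right h4d (by positivity)
        _ = 2 * 4^(L+1) * (Nat.choose a k : ℝ) * Real.sqrt (a+1) := by ring
    have heps : epsL L * (2 * 4^(L+1)) ≤ 1 := by
      unfold epsL
      have h6 : (2:ℝ) ≤ (2:ℝ)^(10*(L+2)) := by
        calc (2:ℝ) = 2^1 := (pow_one 2).symm
          _ ≤ 2^(10*(L+2)) := pow_le_pow_right₀ (by norm_num) (by omega)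
      have h5 : (0:ℝ) < (4:ℝ)^(L+1) := by positivity
      have h7 : (0:ℝ) < (2:ℝ)^(10*(L+2)) := by positivity
      have : ((4:ℝ)^(L+1))⁻¹ * ((2:ℝ)^(10*(L+2)))⁻¹ * (2 * 4^(L+1)) =
          (2 / (2:ℝ)^(10*(L+2))) := by field_simp
      rw [this, div_le_one h7]; exact h6
    calc epsL L * 2^a ≤ epsL L * (2 * 4^(L+1) * (Nat.choose a k : ℝ) * Real.sqrt (a+1)) := by
          apply mul_le_mul_of_nonneg_left hchain (le_of_lt (epsL_pos L))
      _ = (epsL L * (2 * 4^(L+1))) * ((Nat.choose a k : ℝ) * Real.sqrt (a+1)) := by ring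
      _ ≤ 1 * ((Nat.choose a k : ℝ) * Real.sqrt (a+1)) := by
          apply mul_le_mul_of_nonneg_right heps (by positivity)
      _ = (Nat.choose a k : ℝ) * Real.sqrt (a+1) := one_mul _

lemma selection {ι : Type*} [Fintype ι] [DecidableEq ι] (c : ι → ℕ) :
    ∀ s : ℕ, s ≤ ∑ T, c T → ∃ k : ι → ℕ, (∀ T, k T ≤ c T) ∧ ∑ T, k T = s := by
  intro s
  induction s with
  | zero => intro _; exact ⟨fun _ => 0, fun _ => Nat.zero_le _, by simp⟩
  | succ s ih =>
    intro hs
    obtain ⟨k, hk, hsum⟩ := ih (by omega)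
    have hex : ∃ T, k T < c T := by
      by_contra hc
      push_neg at hc
      have : ∀ T, k T = c T := fun T => le_antisymm (hk T) (hc T)
      have : ∑ T, k T = ∑ T, c T := Finset.sum_congr rfl (fun T _ => this T)
      omega
    obtain ⟨T₀, hT₀⟩ := hex
    refine ⟨Function.update k T₀ (k T₀ + 1), ?_, ?_⟩
    · intro T
      by_cases h : T = T₀
      · subst h; rw [Function.update_self]; omega
      · rw [Function.update_of_ne h]; exact hk T
    · rw [Finset.sum_update_of_mem (Finset.mem_univ T₀)]
      rw [← Finset.sum_erase_add _ _ (Finset.mem_univ T₀)] at hsum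
      have : Finset.univ.erase T₀ = Finset.univ \ {T₀} := by
        ext t; simp [Finset.mem_erase, Finset.mem_sdiff]
      rw [this] at hsum
      omega

section CL
variable {n ℓ : ℕ} (x : Fin n → Bool) (y : Fin ℓ → Fin n → Bool)

private def fibF (x : Fin n → Bool) (y : Fin ℓ → Fin n → Bool) (j : Fin n) : Finset (Fin ℓ) :=
  Finset.univ.filter (fun i => y i j ≠ x j)

private def fiberF (x : Fin n → Bool) (y : Fin ℓ → Fin n → Bool) (T : Finset (Fin ℓ)) : Finset (Fin n) :=
  Finset.univ.filter (fun j => fibF x y j = T)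

lemma count_lower (r : ℕ) (k : Finset (Fin ℓ) → ℕ)
    (hsum : ∑ T, k T = r)
    (hcon : ∀ i : Fin ℓ,
      2 * (∑ T ∈ Finset.univ.filter (fun T => i ∈ T), k T) <
        ∑ T ∈ Finset.univ.filter (fun T => i ∈ T), (fiberF x y T).card) :
    (∏ T : Finset (Fin ℓ), Nat.choose ((fiberF x y T).card) (k T)) ≤
      (Finset.univ.filter (fun z : Fin n → Bool =>
        hammingDist z x = r ∧ ∀ i, r < hammingDist z (y i))).card := by
  classical
  set P := Fintype.piFinset (fun T => (fiberF x y T).powersetCard (k T)) with hP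
  have hPcard : P.card = ∏ T : Finset (Fin ℓ), Nat.choose ((fiberF x y T).card) (k T) := by
    rw [hP, Fintype.card_piFinset]
    exact Finset.prod_congr rfl (fun T _ => Finset.card_powersetCard _ _)
  set Φ : ((T : Finset (Fin ℓ)) → Finset (Fin n)) → (Fin n → Bool) :=
    fun g j => if j ∈ g (fibF x y j) then !(x j) else x j with hΦ
  -- basic facts about members of P
  have hmem : ∀ g ∈ P, ∀ T, g T ⊆ fiberF x y T ∧ (g T).card = k T := by
    intro g hg T
    have := (Fintype.mem_piFinset.1 hg) T
    exact Finset.mem_powersetCard.1 this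
  have hdiff : ∀ g, ∀ j, (Φ g j ≠ x j) ↔ j ∈ g (fibF x y j) := by
    intro g j
    rw [hΦ]
    by_cases h : j ∈ g (fibF x y j) <;> simp [h]
  -- Claim B
  have claimB : ∀ g ∈ P, ∀ T,
      Finset.univ.filter (fun j => Φ g j ≠ x j ∧ fibF x y j = T) = g T := by
    intro g hg T
    ext j
    simp only [Finset.mem_filter, Finset.mem_univ, true_and]
    constructor
    · rintro ⟨hz, hf⟩
      have := (hdiff g j).1 hz
      rwa [hf] at this
    · intro hj
      have hsub := (hmem g hg T).1 hj
      have hf : fibF x y j = T := (Finset.mem_filter.1 hsub).2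
      refine ⟨?_, hf⟩
      rw [hdiff g j, hf]
      exact hj
  -- distance to x
  have hdx : ∀ g ∈ P, hammingDist (Φ g) x = r := by
    intro g hg
    have : hammingDist (Φ g) x = (Finset.univ.filter (fun j => Φ g j ≠ x j)).card := rfl
    rw [this, Finset.card_eq_sum_card_fiberwise
      (f := fibF x y) (t := Finset.univ) (fun j _ => Finset.mem_univ _)]
    rw [← hsum]
    apply Finset.sum_congr rfl
    intro T _
    rw [Finset.filter_filter, claimB g hg T, (hmem g hg T).2]
  -- distance to y i
  have hdy : ∀ g ∈ P, ∀ i : Fin ℓ, r < hammingDist (Φ g) (y i) := by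
    intro g hg i
    have hrfl : hammingDist (Φ g) (y i) = (Finset.univ.filter (fun j => Φ g j ≠ y i j)).card := rfl
    have hsplit : (Finset.univ.filter (fun j => Φ g j ≠ y i j)).card =
        ∑ T : Finset (Fin ℓ),
          (Finset.univ.filter (fun j => Φ g j ≠ y i j ∧ fibF x y j = T)).card := by
      rw [Finset.card_eq_sum_card_fiberwise
        (f := fibF x y) (t := Finset.univ) (fun j _ => Finset.mem_univ _)]
      exact Finset.sum_congr rfl (fun T _ => by rw [Finset.filter_filter])
    have hyx : ∀ j, (y i j ≠ x j) ↔ i ∈ fibF x y j := by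
      intro j; simp [fibF]
    -- per-fiber values
    have hin : ∀ T, i ∈ T →
        Finset.univ.filter (fun j => Φ g j ≠ y i j ∧ fibF x y j = T) =
          fiberF x y T \ g T := by
      intro T hi
      ext j
      simp only [Finset.mem_filter, Finset.mem_univ, true_and, Finset.mem_sdiff]
      constructor
      · rintro ⟨hz, hf⟩
        have hyj : y i j ≠ x j := (hyx j).2 (by rw [hf]; exact hi)
        have hzx : ¬ (Φ g j ≠ x j) := by
          intro hc
          have h1 := (hdiff g j).1 hc
          -- Φ g j = !(x j) and y i j ≠ x j means Φ g j = y i j? need bool reasoning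
          have hΦv : Φ g j = !(x j) := by rw [hΦ]; simp [h1]
          have : Φ g j = y i j := by
            revert hyj hΦv
            cases (x j) <;> cases (y i j) <;> cases (Φ g j) <;> decide
          exact hz this
        constructor
        · simp [fiberF, hf]
        · intro hc
          apply hzx
          rw [hdiff g j, hf]
          exact hc
      · rintro ⟨hfib, hng⟩
        have hf : fibF x y j = T := (Finset.mem_filter.1 hfib).2
        have hyj : y i j ≠ x j := (hyx j).2 (by rw [hf]; exact hi)
        have hzx : Φ g j = x j := by
          by_contra hc
          exact hng (by rw [← hf]; exact (hdiff g j).1 hc)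
        refine ⟨?_, hf⟩
        rw [hzx]
        exact fun h => hyj h.symm
    have hout : ∀ T, i ∉ T →
        Finset.univ.filter (fun j => Φ g j ≠ y i j ∧ fibF x y j = T) = g T := by
      intro T hi
      rw [← claimB g hg T]
      apply Finset.filter_congr
      intro j _
      constructor
      · rintro ⟨hz, hf⟩
        refine ⟨?_, hf⟩
        have hyj : y i j = x j := by
          by_contra hc
          exact hi (by rw [← hf]; exact (hyx j).1 hc)
        rwa [hyj] at hz
      · rintro ⟨hz, hf⟩
        refine ⟨?_, hf⟩
        have hyj : y i j = x j := by
          by_contra hc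
          exact hi (by rw [← hf]; exact (hyx j).1 hc)
        rwa [← hyj] at hz
    -- now compute
    rw [hrfl, hsplit, ← Finset.sum_filter_add_sum_filter_not Finset.univ (fun T => i ∈ T)]
    have e1 : ∑ T ∈ Finset.univ.filter (fun T => i ∈ T),
        (Finset.univ.filter (fun j => Φ g j ≠ y i j ∧ fibF x y j = T)).card =
        ∑ T ∈ Finset.univ.filter (fun T => i ∈ T), ((fiberF x y T).card - k T) := by
      apply Finset.sum_congr rfl
      intro T hT
      rw [hin T (Finset.mem_filter.1 hT).2, Finset.card_sdiff_of_subset (hmem g hg T).1, (hmem g hg T).2]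
    have e2 : ∑ T ∈ Finset.univ.filter (fun T => ¬ i ∈ T),
        (Finset.univ.filter (fun j => Φ g j ≠ y i j ∧ fibF x y j = T)).card =
        ∑ T ∈ Finset.univ.filter (fun T => ¬ i ∈ T), k T := by
      apply Finset.sum_congr rfl
      intro T hT
      rw [hout T (Finset.mem_filter.1 hT).2, (hmem g hg T).2]
    rw [e1, e2]
    -- arithmetic
    have hK := hcon i
    have hsub : ∑ T ∈ Finset.univ.filter (fun T => i ∈ T), (fiberF x y T).card ≤
        (∑ T ∈ Finset.univ.filter (fun T => i ∈ T), ((fiberF x y T).card - k T)) +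
          ∑ T ∈ Finset.univ.filter (fun T => i ∈ T), k T := by
      rw [← Finset.sum_add_distrib]
      exact Finset.sum_le_sum (fun T _ => by omega)
    have hrsplit : r = (∑ T ∈ Finset.univ.filter (fun T => i ∈ T), k T) +
        ∑ T ∈ Finset.univ.filter (fun T => ¬ i ∈ T), k T := by
      rw [← hsum, ← Finset.sum_filter_add_sum_filter_not Finset.univ (fun T => i ∈ T)]
    omega
  -- injectivity
  have hinj : Set.InjOn Φ P := by
    intro g hg g' hg' heq
    funext T
    rw [← claimB g hg T, ← claimB g' hg' T, heq]
  have hmemT : ∀ g ∈ P, Φ g ∈ Finset.univ.filter (fun z : Fin n → Bool =>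
      hammingDist z x = r ∧ ∀ i, r < hammingDist z (y i)) := by
    intro g hg
    rw [Finset.mem_filter]
    exact ⟨Finset.mem_univ _, hdx g hg, hdy g hg⟩
  have := Finset.card_le_card_of_injOn Φ hmemT hinj
  rw [hPcard] at this
  exact this

end CL

/-- For fixed `ℓ ≥ 1` and every `L ≥ 2^ℓ` there are `c > 0` and `n₀` such that
for all `n ≥ n₀`, all words `x, y₁, …, y_ℓ` with `yᵢ ≠ x`, and `r = ⌊n/2⌋ - L`,
at least `c·n^{-2^{ℓ-1}}·2ⁿ` words `z` satisfy `d(z,x) = r` and `d(z,yᵢ) > r` for all `i`. -/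
theorem many_words_at_exact_distance_near_half (ℓ L : ℕ) (hℓ : 1 ≤ ℓ) (hL : 2 ^ ℓ ≤ L) :
    ∃ (c : ℝ), 0 < c ∧ ∃ n₀ : ℕ, ∀ n : ℕ, n₀ ≤ n →
      ∀ (x : Fin n → Bool) (y : Fin ℓ → (Fin n → Bool)), (∀ i, y i ≠ x) →
        c * (n : ℝ) ^ (-((2 : ℝ) ^ (ℓ - 1))) * 2 ^ n ≤
          ((Finset.univ.filter (fun z : Fin n → Bool =>
            hammingDist z x = n / 2 - L ∧ ∀ i, n / 2 - L < hammingDist z (y i))).card : ℝ) := by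
  classical
  set E : ℕ := 2^(ℓ-1) with hE
  refine ⟨epsL L ^ (2^ℓ) / 2^E, by have := epsL_pos L; positivity, 4*L+4, ?_⟩
  intro n hn x y hy
  set r : ℕ := n/2 - L with hr
  set a : Finset (Fin ℓ) → ℕ := fun T => (fiberF x y T).card with ha
  have hEℓ : 2^ℓ = E * 2 := by
    rw [hE, ← pow_succ]
    congr 1
    omega
  have hcardU : (Finset.univ : Finset (Finset (Fin ℓ))).card = 2^ℓ := by
    rw [Finset.card_univ, Fintype.card_finset, Fintype.card_fin]
  have hsuma : ∑ T : Finset (Fin ℓ), a T = n := by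
    have := Finset.card_eq_sum_card_fiberwise
      (f := fibF x y) (s := (Finset.univ : Finset (Fin n))) (t := Finset.univ)
      (fun j _ => Finset.mem_univ _)
    rw [Finset.card_univ, Fintype.card_fin] at this
    simp only [ha, fiberF]
    exact this.symm
  set cT : Finset (Fin ℓ) → ℕ := fun T => (a T - 1)/2 with hcT
  have hac : ∀ T, a T ≤ 2 * cT T + 2 ∧ 2 * cT T ≤ a T := by
    intro T; constructor <;> · simp only [hcT]; omega
  have hsumc_up : 2 * (∑ T : Finset (Fin ℓ), cT T) ≤ n := by
    rw [← hsuma, Finset.mul_sum]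
    exact Finset.sum_le_sum (fun T _ => (hac T).2)
  have hsumc_lo : n ≤ 2 * (∑ T : Finset (Fin ℓ), cT T) + 2 * 2^ℓ := by
    have h1 : ∑ T : Finset (Fin ℓ), a T ≤ ∑ T : Finset (Fin ℓ), (2 * cT T + 2) :=
      Finset.sum_le_sum (fun T _ => (hac T).1)
    rw [Finset.sum_add_distrib, Finset.sum_const, hcardU, ← Finset.mul_sum, smul_eq_mul] at h1
    omega
  have hrc : r ≤ ∑ T : Finset (Fin ℓ), cT T := by
    have h2 : 2^ℓ ≤ L := hL
    omega
  obtain ⟨k, hk, hksum⟩ := selection cT r hrc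
  have hdev : ∀ T, cT T ≤ k T + L := by
    intro T
    have h1 : k T + ∑ T' ∈ Finset.univ.erase T, k T' = ∑ T' : Finset (Fin ℓ), k T' :=
      Finset.add_sum_erase _ k (Finset.mem_univ T)
    have h2 : cT T + ∑ T' ∈ Finset.univ.erase T, cT T' = ∑ T' : Finset (Fin ℓ), cT T' :=
      Finset.add_sum_erase _ cT (Finset.mem_univ T)
    have h3 : ∑ T' ∈ Finset.univ.erase T, k T' ≤ ∑ T' ∈ Finset.univ.erase T, cT T' :=
      Finset.sum_le_sum (fun T' _ => hk T')
    -- Δ = ∑c - r ≤ L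
    omega
  have hfb : ∀ T, 2 * k T ≤ a T ∧ a T ≤ 2 * k T + 2*L + 2 := by
    intro T
    have h1 := hac T
    have h2 := hk T
    have h3 := hdev T
    omega
  -- constraint for count_lower
  have hcon : ∀ i : Fin ℓ,
      2 * (∑ T ∈ Finset.univ.filter (fun T => i ∈ T), k T) <
        ∑ T ∈ Finset.univ.filter (fun T => i ∈ T), a T := by
    intro i
    have hex : ∃ T ∈ Finset.univ.filter (fun T : Finset (Fin ℓ) => i ∈ T), 1 ≤ a T := by
      have : y i ≠ x := hy i
      have hj : ∃ j, y i j ≠ x j := by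
        by_contra hc
        push_neg at hc
        exact this (funext hc)
      obtain ⟨j, hj⟩ := hj
      refine ⟨fibF x y j, ?_, ?_⟩
      · simp only [Finset.mem_filter, Finset.mem_univ, true_and, fibF]
        simp [hj]
      · have : j ∈ fiberF x y (fibF x y j) := by
          simp [fiberF]
        have h9 := Finset.card_pos.2 ⟨j, this⟩
        show 1 ≤ (fiberF x y (fibF x y j)).card
        exact h9
    obtain ⟨T₀, hT₀, hT₀1⟩ := hex
    rw [Finset.mul_sum]
    apply Finset.sum_lt_sum
    · intro T _
      exact (hfb T).1
    · refine ⟨T₀, hT₀, ?_⟩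
      have h2 := hk T₀
      simp only [hcT] at h2
      omega
  have hcount := count_lower x y r k hksum hcon
  -- real chain
  have haTn : ∀ T, a T ≤ n := by
    intro T
    calc a T ≤ (Finset.univ : Finset (Fin n)).card := Finset.card_filter_le _ _
      _ = n := by rw [Finset.card_univ, Fintype.card_fin]
  have key : ∀ T : Finset (Fin ℓ), epsL L * 2^(a T) ≤
      (Nat.choose (a T) (k T) : ℝ) * Real.sqrt (n+1) := by
    intro T
    refine (fiber_binom L (a T) (k T) (hfb T).1 (hfb T).2).trans ?_
    apply mul_le_mul_of_nonneg_left _ (by positivity)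
    apply Real.sqrt_le_sqrt
    have := haTn T
    push_cast
    exact_mod_cast by exact_mod_cast Nat.add_le_add_right this 1
  have hprod : epsL L ^ (2^ℓ) * 2^n ≤
      (∏ T : Finset (Fin ℓ), (Nat.choose (a T) (k T) : ℝ)) * ((n:ℝ)+1)^E := by
    have h1 : ∏ T : Finset (Fin ℓ), (epsL L * 2^(a T)) ≤
        ∏ T : Finset (Fin ℓ), ((Nat.choose (a T) (k T) : ℝ) * Real.sqrt (n+1)) := by
      apply Finset.prod_le_prod
      · intro T _
        have := epsL_pos L
        positivity
      · intro T _
        exact key T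
    have h2 : ∏ T : Finset (Fin ℓ), (epsL L * 2^(a T)) = epsL L ^ (2^ℓ) * 2^n := by
      rw [Finset.prod_mul_distrib, Finset.prod_const, hcardU, Finset.prod_pow_eq_pow_sum, hsuma]
    have h3 : ∏ T : Finset (Fin ℓ), ((Nat.choose (a T) (k T) : ℝ) * Real.sqrt (n+1)) =
        (∏ T : Finset (Fin ℓ), (Nat.choose (a T) (k T) : ℝ)) * ((n:ℝ)+1)^E := by
      rw [Finset.prod_mul_distrib, Finset.prod_const, hcardU]
      congr 1
      rw [hEℓ, pow_mul', Real.sq_sqrt (by positivity)]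
    rw [← h2, ← h3]
    exact h1
  have hN : (∏ T : Finset (Fin ℓ), (Nat.choose (a T) (k T) : ℝ)) ≤
      ((Finset.univ.filter (fun z : Fin n → Bool =>
        hammingDist z x = r ∧ ∀ i, r < hammingDist z (y i))).card : ℝ) := by
    exact_mod_cast hcount
  set N : ℝ := ((Finset.univ.filter (fun z : Fin n → Bool =>
        hammingDist z x = r ∧ ∀ i, r < hammingDist z (y i))).card : ℝ) with hNdef
  have hNpos : 0 ≤ N := by positivity
  have hnp : (0:ℝ) < n := by
    have : 1 ≤ n := by omega
    exact_mod_cast Nat.lt_of_lt_of_le Nat.zero_lt_one this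
  -- rewrite rpow
  have hrpow : (n : ℝ) ^ (-((2 : ℝ) ^ (ℓ - 1))) = ((n:ℝ)^E)⁻¹ := by
    have h1 : ((2:ℝ) ^ (ℓ-1)) = ((E : ℕ) : ℝ) := by rw [hE]; push_cast; ring
    rw [h1, Real.rpow_neg (le_of_lt hnp), Real.rpow_natCast]
  rw [hrpow]
  have hmain : epsL L ^ (2^ℓ) * 2^n ≤ N * ((n:ℝ)+1)^E := by
    refine hprod.trans ?_
    apply mul_le_mul_of_nonneg_right hN (by positivity)
  have hn1 : ((n:ℝ)+1)^E ≤ 2^E * (n:ℝ)^E := by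
    have h1 : (n:ℝ)+1 ≤ 2*n := by
      have : (1:ℝ) ≤ n := by exact_mod_cast (by omega : 1 ≤ n)
      linarith
    calc ((n:ℝ)+1)^E ≤ (2*(n:ℝ))^E := pow_le_pow_left₀ (by positivity) h1 E
      _ = 2^E * (n:ℝ)^E := mul_pow 2 _ E
  have hfinal : epsL L ^ (2^ℓ) * 2^n ≤ N * (2^E * (n:ℝ)^E) := by
    refine hmain.trans ?_
    apply mul_le_mul_of_nonneg_left hn1 hNpos
  have hid : epsL L ^ (2^ℓ) / 2^E * ((n:ℝ)^E)⁻¹ * 2^n =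
      (epsL L ^ (2^ℓ) * 2^n) / (2^E * (n:ℝ)^E) := by
    field_simp
  rw [hid, div_le_iff₀ (by positivity)]
  exact hfinal
end

section
/- Let r ≥ 1, ℓ ≥ 1 and n ≥ 1, and suppose m_n(r,ℓ) > 0. Then there exists an (r,≤ℓ)-identifying code C in 𝔽ⁿ whose size K satisfies K ≤ ⌈(2ⁿ / m_n(r,ℓ))·ln N_ℓ⌉ + 1, where N_ℓ is the number of unordered pairs {X,Y} of subsets of 𝔽ⁿ with X ≠ Y, 1 ≤ |X| ≤ ℓ and 1 ≤ |Y| ≤ ℓ. -/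
open Finset

lemma greedy_step {α ι : Type*} [Fintype α] [Nonempty α] [DecidableEq α] [DecidableEq ι]
    (f : ι → Finset α) (P : Finset ι)
    (m : ℕ) (hm : ∀ p ∈ P, m ≤ (f p).card) :
    ∃ x : α, m * P.card ≤ Fintype.card α * (P.filter (fun p => x ∈ f p)).card := by
  have key : ∑ x : α, (P.filter (fun p => x ∈ f p)).card = ∑ p ∈ P, (f p).card := by
    simp only [Finset.card_filter]
    rw [Finset.sum_comm]
    congr 1
    ext p
    simp [Finset.card_filter]
  have h1 : m * P.card ≤ ∑ x : α, (P.filter (fun p => x ∈ f p)).card := by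
    rw [key]
    calc m * P.card = ∑ _p ∈ P, m := by rw [Finset.sum_const, Nat.mul_comm, smul_eq_mul]
    _ ≤ ∑ p ∈ P, (f p).card := Finset.sum_le_sum hm
  obtain ⟨x, -, hx⟩ := Finset.exists_le_of_sum_le (Finset.univ_nonempty (α := α))
    (f := fun _ => m * P.card) (g := fun x => Fintype.card α * (P.filter (fun p => x ∈ f p)).card)
    (by rw [Finset.sum_const, smul_eq_mul, ← Finset.mul_sum]
        exact Nat.mul_le_mul_left _ h1)
  exact ⟨x, hx⟩


lemma greedy_cover {α ι : Type*} [Fintype α] [Nonempty α] [DecidableEq α] [DecidableEq ι]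
    (f : ι → Finset α) (m : ℕ) (hm0 : 0 < m) :
    ∀ k : ℕ, ∀ P : Finset ι, (∀ p ∈ P, m ≤ (f p).card) →
      ∃ T : Finset α, T.card ≤ k ∧
        (((P.filter (fun p => f p ∩ T = ∅)).card : ℝ) ≤
          P.card * (1 - (m : ℝ) / (Fintype.card α : ℝ)) ^ k) := by
  intro k
  induction k with
  | zero =>
    intro P hP
    refine ⟨∅, le_rfl, ?_⟩
    simp only [Finset.inter_empty, pow_zero, mul_one]
    exact_mod_cast Finset.card_le_card (Finset.filter_subset _ _)
  | succ k ih =>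
    intro P hP
    rcases P.eq_empty_or_nonempty with rfl | hPne
    · exact ⟨∅, Nat.zero_le _, by simp⟩
    have hu : (0:ℝ) < Fintype.card α := by exact_mod_cast Fintype.card_pos
    -- m ≤ card α
    obtain ⟨p0, hp0⟩ := hPne
    have hmu : (m:ℝ) ≤ Fintype.card α := by
      have := (hP p0 hp0).trans (Finset.card_le_card (Finset.subset_univ (f p0)))
      simpa [Finset.card_univ] using (Nat.cast_le (α := ℝ)).2 this
    have hbase : (0:ℝ) ≤ 1 - (m:ℝ)/(Fintype.card α : ℝ) := by
      rw [sub_nonneg, div_le_one hu]; exact hmu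
    obtain ⟨x, hx⟩ := greedy_step f P m hP
    set P' := P.filter (fun p => x ∉ f p) with hP'
    have hP'card : ((P' : Finset ι).card : ℝ) ≤ P.card * (1 - (m:ℝ)/(Fintype.card α)) := by
      have hsplit : (P.filter (fun p => x ∈ f p)).card + P'.card = P.card :=
        Finset.card_filter_add_card_filter_not _
      have hxR : (m:ℝ) * P.card ≤ (Fintype.card α : ℝ) * (P.filter (fun p => x ∈ f p)).card := by
        exact_mod_cast hx
      have : ((P.filter (fun p => x ∈ f p)).card : ℝ) ≥ (m:ℝ) * P.card / Fintype.card α := by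
        rw [ge_iff_le, div_le_iff₀ hu]; linarith [hxR]
      have hPcast : (P'.card : ℝ) = (P.card : ℝ) - (P.filter (fun p => x ∈ f p)).card := by
        have := congrArg (fun t : ℕ => (t : ℝ)) hsplit
        push_cast at this
        linarith
      rw [hPcast]
      rw [mul_sub, mul_one]
      have : (P.card : ℝ) * ((m:ℝ)/Fintype.card α) = (m:ℝ) * P.card / Fintype.card α := by ring
      linarith [this]
    obtain ⟨T', hT'card, hT'⟩ := ih P' (fun p hp => hP p (Finset.mem_filter.1 hp).1)
    refine ⟨insert x T', ?_, ?_⟩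
    · exact (Finset.card_insert_le _ _).trans (Nat.succ_le_succ hT'card)
    · have hsub : P.filter (fun p => f p ∩ insert x T' = ∅) ⊆
          P'.filter (fun p => f p ∩ T' = ∅) := by
        intro p hp
        rw [Finset.mem_filter] at hp
        obtain ⟨hpP, hpe⟩ := hp
        have hxn : x ∉ f p := by
          intro hxp
          have : x ∈ f p ∩ insert x T' := Finset.mem_inter.2 ⟨hxp, Finset.mem_insert_self _ _⟩
          simp [hpe] at this
        refine Finset.mem_filter.2 ⟨Finset.mem_filter.2 ⟨hpP, hxn⟩, ?_⟩
        have : f p ∩ T' ⊆ f p ∩ insert x T' :=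
          Finset.inter_subset_inter le_rfl (Finset.subset_insert _ _)
        rw [hpe] at this
        exact Finset.subset_empty.1 this
      have h1 : ((P.filter (fun p => f p ∩ insert x T' = ∅)).card : ℝ)
          ≤ ((P'.filter (fun p => f p ∩ T' = ∅)).card : ℝ) := by
        exact_mod_cast Finset.card_le_card hsub
      have h2 : ((P'.filter (fun p => f p ∩ T' = ∅)).card : ℝ)
          ≤ P'.card * (1 - (m:ℝ)/(Fintype.card α)) ^ k := hT'
      have h3 : (P'.card : ℝ) * (1 - (m:ℝ)/(Fintype.card α)) ^ k
          ≤ (P.card * (1 - (m:ℝ)/(Fintype.card α))) * (1 - (m:ℝ)/(Fintype.card α)) ^ k := by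
        exact mul_le_mul_of_nonneg_right hP'card (pow_nonneg hbase k)
      calc ((P.filter (fun p => f p ∩ insert x T' = ∅)).card : ℝ)
          ≤ _ := h1
        _ ≤ _ := h2
        _ ≤ _ := h3
        _ = P.card * (1 - (m:ℝ)/(Fintype.card α)) ^ (k+1) := by ring

lemma myHitting {α ι : Type*} [Fintype α] [Nonempty α] [DecidableEq α] [DecidableEq ι]
    (f : ι → Finset α) (P : Finset ι) (m : ℕ) (hm0 : 0 < m) (hN : 2 ≤ P.card)
    (hP : ∀ p ∈ P, m ≤ (f p).card) :
    ∃ T : Finset α,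
      ((T.card : ℝ) ≤ (⌈((Fintype.card α : ℝ) / m) * Real.log P.card⌉ : ℤ)) ∧
      ∀ p ∈ P, (f p ∩ T).Nonempty := by
  set u : ℕ := Fintype.card α with hu
  have hu0 : (0:ℝ) < u := by exact_mod_cast Fintype.card_pos
  have hm0R : (0:ℝ) < m := by exact_mod_cast hm0
  have hmu : (m:ℝ) ≤ u := by
    obtain ⟨p0, hp0⟩ := Finset.card_pos.1 (by omega : 0 < P.card)
    have := (hP p0 hp0).trans (Finset.card_le_card (Finset.subset_univ (f p0)))
    exact_mod_cast this.trans_eq (Finset.card_univ)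
  have hNR : (2:ℝ) ≤ P.card := by exact_mod_cast hN
  have hlogN : (0:ℝ) < Real.log P.card := Real.log_pos (by linarith)
  set x : ℝ := ((u : ℝ) / m) * Real.log P.card with hxdef
  have hx0 : 0 < x := mul_pos (div_pos hu0 hm0R) hlogN
  have hceil1 : (1:ℤ) ≤ ⌈x⌉ := Int.ceil_pos.2 hx0
  set K : ℕ := ⌈x⌉.toNat with hK
  have hKcast : (K : ℝ) = (⌈x⌉ : ℤ) := by
    rw [hK]; exact_mod_cast Int.toNat_of_nonneg (by omega)
  have hKge : x ≤ (K : ℝ) := by rw [hKcast]; exact Int.le_ceil x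
  have hK1 : 1 ≤ K := by rw [hK]; omega
  obtain ⟨T, hTcard, hTcov⟩ := greedy_cover f m hm0 K P hP
  refine ⟨T, ?_, ?_⟩
  · rw [← hKcast]; exact_mod_cast hTcard
  · -- show uncovered is empty
    set a : ℝ := (m:ℝ) / u with ha
    have ha0 : 0 < a := div_pos hm0R hu0
    have ha1 : a ≤ 1 := by rw [ha, div_le_one hu0]; exact hmu
    have hexp : 1 - a < Real.exp (-a) := by
      have := Real.add_one_lt_exp (x := -a) (by linarith)
      linarith
    have hpow : (1 - a) ^ K < Real.exp (-a) ^ K := by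
      apply pow_lt_pow_left₀ hexp (by linarith) (by omega)
    have hexpK : Real.exp (-a) ^ K = Real.exp (-(a * K)) := by
      rw [← Real.exp_nat_mul]; ring_nf
    have haK : Real.log P.card ≤ a * K := by
      have h1 : a * x = Real.log P.card := by
        rw [ha, hxdef]; field_simp
      calc Real.log P.card = a * x := h1.symm
        _ ≤ a * K := by exact mul_le_mul_of_nonneg_left hKge ha0.le
    have hlast : (P.card : ℝ) * Real.exp (-(a * K)) ≤ 1 := by
      have : Real.exp (-(a * K)) ≤ Real.exp (-(Real.log P.card)) :=
        Real.exp_le_exp.2 (by linarith)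
      have hexplog : Real.exp (-(Real.log P.card)) = 1 / P.card := by
        rw [Real.exp_neg, Real.exp_log (by linarith)]
        rw [one_div]
      calc (P.card : ℝ) * Real.exp (-(a * K)) ≤ (P.card : ℝ) * (1 / P.card) := by
            rw [← hexplog]; exact mul_le_mul_of_nonneg_left this (by positivity)
        _ = 1 := by field_simp
    have hlt : ((P.filter (fun p => f p ∩ T = ∅)).card : ℝ) < 1 := by
      have hc : (P.card:ℝ) * (1 - a) ^ K < (P.card:ℝ) * Real.exp (-(a*K)) := by
        rw [← hexpK]
        exact mul_lt_mul_of_pos_left hpow (by linarith)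
      calc ((P.filter (fun p => f p ∩ T = ∅)).card : ℝ)
          ≤ (P.card:ℝ) * (1 - a) ^ K := hTcov
        _ < (P.card:ℝ) * Real.exp (-(a*K)) := hc
        _ ≤ 1 := hlast
    have hzero : (P.filter (fun p => f p ∩ T = ∅)).card = 0 := by exact_mod_cast Nat.lt_one_iff.1 (by exact_mod_cast hlt)
    intro p hp
    rw [Finset.nonempty_iff_ne_empty]
    intro hemp
    have : p ∈ P.filter (fun p => f p ∩ T = ∅) := Finset.mem_filter.2 ⟨hp, hemp⟩
    rw [Finset.card_eq_zero.1 hzero] at this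
    exact absurd this (Finset.notMem_empty p)



/-- If `m_n(r,ℓ) > 0`, there exists an `(r,≤ℓ)`-identifying code of size
`K ≤ ⌈(2ⁿ / m_n(r,ℓ))·ln N_ℓ⌉ + 1`. -/
theorem exists_identifying_code_of_mlow_pos (n r ℓ : ℕ) (hr : 1 ≤ r) (hℓ : 1 ≤ ℓ)
    (hn : 1 ≤ n) (hm : 0 < mlow n r ℓ) :
    ∃ C : Finset (Fin n → Bool), IdCode n r ℓ C ∧
      (C.card : ℝ) ≤ ⌈((2 : ℝ) ^ n / (mlow n r ℓ : ℝ)) * Real.log (Npairs n ℓ)⌉ + 1 := by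
  classical
  set α := (Fin n → Bool)
  set g : Finset (Fin n → Bool) → Finset (Fin n → Bool) :=
    fun X => X.biUnion (ballH n r) with hg
  set F : Finset (Finset (Fin n → Bool)) :=
    Finset.univ.filter (fun X => 1 ≤ X.card ∧ X.card ≤ ℓ) with hF
  set P : Finset (Finset (Finset (Fin n → Bool))) := F.powersetCard 2 with hP
  set f : Finset (Finset (Fin n → Bool)) → Finset (Fin n → Bool) :=
    fun p => Finset.univ.filter (fun v => (∃ X ∈ p, v ∈ g X) ∧ (∃ X ∈ p, v ∉ g X)) with hf
  set m : ℕ := mlow n r ℓ with hmdef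
  -- f on a pair is the symmetric difference
  have fpair : ∀ X Y : Finset (Fin n → Bool), X ≠ Y →
      f {X, Y} = symmDiff (g X) (g Y) := by
    intro X Y hXY
    ext v
    simp only [hf, Finset.mem_filter, Finset.mem_univ, true_and, Finset.mem_insert,
      Finset.mem_singleton, Finset.mem_symmDiff]
    constructor
    · rintro ⟨⟨A, (rfl | rfl), hA⟩, ⟨B, (rfl | rfl), hB⟩⟩ <;> tauto
    · rintro (⟨h1, h2⟩ | ⟨h1, h2⟩)
      · exact ⟨⟨X, Or.inl rfl, h1⟩, ⟨Y, Or.inr rfl, h2⟩⟩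
      · exact ⟨⟨Y, Or.inr rfl, h1⟩, ⟨X, Or.inl rfl, h2⟩⟩
  -- the size bound on each f p
  have hPdesc : ∀ p ∈ P, ∃ X Y : Finset (Fin n → Bool), X ≠ Y ∧ X ∈ F ∧ Y ∈ F ∧ p = {X, Y} := by
    intro p hp
    rw [hP, Finset.mem_powersetCard] at hp
    obtain ⟨hsub, hcard⟩ := hp
    obtain ⟨X, Y, hXY, rfl⟩ := Finset.card_eq_two.1 hcard
    exact ⟨X, Y, hXY, hsub (by simp), hsub (by simp), rfl⟩
  have hcardF : ∀ X ∈ F, 1 ≤ X.card ∧ X.card ≤ ℓ := by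
    intro X hX; rw [hF, Finset.mem_filter] at hX; exact hX.2
  have hfP : ∀ p ∈ P, m ≤ (f p).card := by
    intro p hp
    obtain ⟨X, Y, hXY, hXF, hYF, rfl⟩ := hPdesc p hp
    rw [fpair X Y hXY]
    apply Nat.sInf_le
    exact ⟨X, Y, hXY, (hcardF X hXF).1, (hcardF X hXF).2, (hcardF Y hYF).1,
      (hcardF Y hYF).2, rfl⟩
  -- n ≥ 2
  have hn2 : 2 ≤ n := by
    by_contra hcon
    have hn1 : n = 1 := by omega
    subst hn1
    have hball : ∀ x : Fin 1 → Bool, ballH 1 r x = Finset.univ := by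
      intro x
      ext y
      simp only [ballH, Finset.mem_filter, Finset.mem_univ, true_and, iff_true]
      calc hammingDist x y ≤ Fintype.card (Fin 1) := hammingDist_le_card_fintype
        _ = 1 := by simp
        _ ≤ r := hr
    have h0 : (0 : ℕ) ∈ {k | ∃ X Y : Finset (Fin 1 → Bool), X ≠ Y ∧ 1 ≤ X.card ∧ X.card ≤ ℓ ∧
        1 ≤ Y.card ∧ Y.card ≤ ℓ ∧
        (symmDiff (X.biUnion (ballH 1 r)) (Y.biUnion (ballH 1 r))).card = 0} := by
      refine ⟨{fun _ => false}, {fun _ => true}, ?_, by simp, by simpa using hℓ,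
        by simp, by simpa using hℓ, ?_⟩
      · simp only [ne_eq, Finset.singleton_inj]
        intro h
        have := congrFun h 0
        simp at this
      · rw [Finset.singleton_biUnion, Finset.singleton_biUnion, hball, hball]
        simp
    have : mlow 1 r ℓ ≤ 0 := Nat.sInf_le h0
    omega
  -- 2 ≤ P.card
  have hFcard : 2 ^ n ≤ F.card := by
    have hsub : Finset.univ.image (fun x : Fin n → Bool => ({x} : Finset (Fin n → Bool))) ⊆ F := by
      intro X hX
      simp only [Finset.mem_image] at hX
      obtain ⟨x, -, rfl⟩ := hX
      rw [hF, Finset.mem_filter]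
      exact ⟨Finset.mem_univ _, by simp [hℓ]⟩
    calc 2 ^ n = Fintype.card (Fin n → Bool) := by simp
      _ = (Finset.univ.image (fun x : Fin n → Bool => ({x} : Finset (Fin n → Bool)))).card := by
          rw [Finset.card_image_of_injective _ Finset.singleton_injective, Finset.card_univ]
      _ ≤ F.card := Finset.card_le_card hsub
  have hPcard : 2 ≤ P.card := by
    rw [hP, Finset.card_powersetCard]
    have h4 : 4 ≤ F.card := le_trans (by nlinarith [pow_le_pow_right₀ (by norm_num : 1 ≤ 2) hn2]) hFcard
    calc 2 ≤ Nat.choose 4 2 := by decide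
      _ ≤ Nat.choose F.card 2 := Nat.choose_le_choose 2 h4
  -- apply the hitting set lemma
  obtain ⟨T, hTcard, hThit⟩ := myHitting f P m hm hPcard hfP
  -- the ball around z, intersected with T
  -- build C by possibly adding one point
  have hcov2 : ∀ z z' : Fin n → Bool, z ≠ z' → (ballH n r z ∩ T = ∅) →
      (ballH n r z' ∩ T).Nonempty := by
    intro z z' hzz hze
    by_contra hz'
    rw [Finset.not_nonempty_iff_eq_empty] at hz'
    have hpmem : ({({z} : Finset (Fin n → Bool)), {z'}} : Finset (Finset (Fin n → Bool))) ∈ P := by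
      rw [hP, Finset.mem_powersetCard]
      constructor
      · intro A hA
        simp only [Finset.mem_insert, Finset.mem_singleton] at hA
        rw [hF, Finset.mem_filter]
        rcases hA with rfl | rfl <;> exact ⟨Finset.mem_univ _, by simp [hℓ]⟩
      · rw [Finset.card_insert_of_notMem (by simp [Finset.singleton_inj, hzz]),
          Finset.card_singleton]
    obtain ⟨c, hc⟩ := hThit _ hpmem
    rw [Finset.mem_inter] at hc
    have hcs : c ∈ symmDiff (g {z}) (g {z'}) := by
      rw [← fpair _ _ (by simp [Finset.singleton_inj, hzz])]; exact hc.1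
    rw [Finset.mem_symmDiff] at hcs
    have hgz : g {z} = ballH n r z := Finset.singleton_biUnion
    have hgz' : g {z'} = ballH n r z' := Finset.singleton_biUnion
    rcases hcs with ⟨h1, -⟩ | ⟨h1, -⟩
    · rw [hgz] at h1
      have : c ∈ ballH n r z ∩ T := Finset.mem_inter.2 ⟨h1, hc.2⟩
      rw [hze] at this; exact absurd this (Finset.notMem_empty c)
    · rw [hgz'] at h1
      have : c ∈ ballH n r z' ∩ T := Finset.mem_inter.2 ⟨h1, hc.2⟩
      rw [hz'] at this; exact absurd this (Finset.notMem_empty c)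
  obtain ⟨C, hTC, hCcard, hCcov⟩ : ∃ C : Finset (Fin n → Bool), T ⊆ C ∧ C.card ≤ T.card + 1 ∧
      ∀ z : Fin n → Bool, (ballH n r z ∩ C).Nonempty := by
    have hself : ∀ z : Fin n → Bool, z ∈ ballH n r z := by
      intro z
      simp [ballH, hammingDist_self]
    by_cases hall : ∀ z : Fin n → Bool, (ballH n r z ∩ T).Nonempty
    · refine ⟨insert (fun _ => false) T, Finset.subset_insert _ _, Finset.card_insert_le _ _, ?_⟩
      intro z
      exact (hall z).mono (Finset.inter_subset_inter le_rfl (Finset.subset_insert _ _))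
    · push_neg at hall
      obtain ⟨z₀, hz₀⟩ := hall
      refine ⟨insert z₀ T, Finset.subset_insert _ _, Finset.card_insert_le _ _, ?_⟩
      intro z
      by_cases hzz : z = z₀
      · subst hzz
        exact ⟨z, Finset.mem_inter.2 ⟨hself z, Finset.mem_insert_self _ _⟩⟩
      · have := hcov2 z₀ z (Ne.symm hzz) hz₀
        exact this.mono (Finset.inter_subset_inter le_rfl (Finset.subset_insert _ _))
  refine ⟨C, ⟨?_, ?_⟩, ?_⟩
  · -- nonempty
    obtain ⟨c, hc⟩ := hCcov (fun _ => false)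
    exact ⟨c, (Finset.mem_inter.1 hc).2⟩
  · -- identifying property
    intro X Y hX hY hXY heq
    rcases X.eq_empty_or_nonempty with rfl | hXne
    · rcases Y.eq_empty_or_nonempty with rfl | hYne
      · exact hXY rfl
      · obtain ⟨y, hy⟩ := hYne
        obtain ⟨c, hc⟩ := hCcov y
        rw [Finset.mem_inter] at hc
        have : c ∈ Y.biUnion (ballH n r) ∩ C :=
          Finset.mem_inter.2 ⟨Finset.mem_biUnion.2 ⟨y, hy, hc.1⟩, hc.2⟩
        rw [← heq] at this
        simp at this
    · rcases Y.eq_empty_or_nonempty with rfl | hYne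
      · obtain ⟨x, hx⟩ := hXne
        obtain ⟨c, hc⟩ := hCcov x
        rw [Finset.mem_inter] at hc
        have : c ∈ X.biUnion (ballH n r) ∩ C :=
          Finset.mem_inter.2 ⟨Finset.mem_biUnion.2 ⟨x, hx, hc.1⟩, hc.2⟩
        rw [heq] at this
        simp at this
      · -- both nonempty
        have hpmem : ({X, Y} : Finset (Finset (Fin n → Bool))) ∈ P := by
          rw [hP, Finset.mem_powersetCard]
          constructor
          · intro A hA
            simp only [Finset.mem_insert, Finset.mem_singleton] at hA
            rw [hF, Finset.mem_filter]
            rcases hA with rfl | rfl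
            · exact ⟨Finset.mem_univ _, Finset.card_pos.2 hXne, hX⟩
            · exact ⟨Finset.mem_univ _, Finset.card_pos.2 hYne, hY⟩
          · rw [Finset.card_insert_of_notMem (by simpa using hXY), Finset.card_singleton]
        obtain ⟨c, hc⟩ := hThit _ hpmem
        rw [Finset.mem_inter] at hc
        have hcs : c ∈ symmDiff (g X) (g Y) := by rw [← fpair _ _ hXY]; exact hc.1
        have hcC : c ∈ C := hTC hc.2
        rw [Finset.mem_symmDiff] at hcs
        rcases hcs with ⟨h1, h2⟩ | ⟨h1, h2⟩
        · have : c ∈ X.biUnion (ballH n r) ∩ C := Finset.mem_inter.2 ⟨h1, hcC⟩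
          rw [heq] at this
          exact h2 (Finset.mem_inter.1 this).1
        · have : c ∈ Y.biUnion (ballH n r) ∩ C := Finset.mem_inter.2 ⟨h1, hcC⟩
          rw [← heq] at this
          exact h2 (Finset.mem_inter.1 this).1
  · -- cardinality bound
    have hconv : ((Fintype.card (Fin n → Bool) : ℝ) / (m : ℝ)) * Real.log P.card
        = ((2 : ℝ) ^ n / (mlow n r ℓ : ℝ)) * Real.log (Npairs n ℓ) := by
      have h1 : (Fintype.card (Fin n → Bool) : ℝ) = (2 : ℝ) ^ n := by
        simp
      have h2 : P.card = Npairs n ℓ := rfl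
      rw [h1, h2, hmdef]
    rw [← hconv]
    have : (C.card : ℝ) ≤ (T.card : ℝ) + 1 := by exact_mod_cast hCcard
    calc (C.card : ℝ) ≤ (T.card : ℝ) + 1 := this
      _ ≤ (⌈((Fintype.card (Fin n → Bool) : ℝ) / (m : ℝ)) * Real.log P.card⌉ : ℤ) + 1 := by
          linarith [hTcard]
end

section
/- Let r ≥ 1, ℓ ≥ 1 and n ≥ 1, and suppose m_n(r,ℓ) > 0. Then M_r^{(≤ℓ)}(n) ≤ 2^{n+1}·ℓ·n / m_n(r,ℓ) + 2. -/
open Finset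

lemma hit_greedy {α : Type*} [Fintype α] [DecidableEq α] (m : ℕ) (hm : 0 < m) :
    ∀ (t : ℕ) (𝒟 : Finset (Finset α)), (∀ D ∈ 𝒟, m ≤ D.card) →
    ((𝒟.card : ℝ) * (1 - (m : ℝ) / (Fintype.card α : ℝ)) ^ t < 1) →
    ∃ C : Finset α, C.card ≤ t ∧ ∀ D ∈ 𝒟, (D ∩ C).Nonempty := by
  intro t
  induction t with
  | zero =>
    intro 𝒟 hD h
    rw [pow_zero, mul_one] at h
    have : 𝒟.card = 0 := by exact_mod_cast Nat.lt_one_iff.mp (by exact_mod_cast h)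
    rw [Finset.card_eq_zero] at this
    subst this
    exact ⟨∅, le_refl _, by simp⟩
  | succ t ih =>
    intro 𝒟 hD h
    rcases Finset.eq_empty_or_nonempty 𝒟 with rfl | ⟨D₀, hD₀⟩
    · exact ⟨∅, by simp, by simp⟩
    have hD₀ne : D₀.Nonempty := Finset.card_pos.mp (lt_of_lt_of_le hm (hD D₀ hD₀))
    obtain ⟨a₀, _⟩ := hD₀ne
    have hα : Nonempty α := ⟨a₀⟩
    set M : ℕ := Fintype.card α with hM
    have hMpos : 0 < M := Fintype.card_pos
    have hMR : (0:ℝ) < (M:ℝ) := by exact_mod_cast hMpos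
    have hmM : m ≤ M := le_trans (hD D₀ hD₀) (Finset.card_le_univ _)
    have hq1 : (m : ℝ) / M ≤ 1 := by
      rw [div_le_one hMR]; exact_mod_cast hmM
    have hq0 : 0 ≤ 1 - (m : ℝ) / M := by linarith
    -- double counting
    have hsum : ∑ x : α, ((𝒟.filter (fun D => x ∈ D)).card) = ∑ D ∈ 𝒟, D.card := by
      simp only [Finset.card_filter]
      rw [Finset.sum_comm]
      refine Finset.sum_congr rfl (fun D _ => ?_)
      rw [Finset.sum_ite_mem, Finset.univ_inter, Finset.sum_const, smul_eq_mul, mul_one]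
    have hsumge : (m : ℝ) * 𝒟.card ≤ ∑ x : α, ((𝒟.filter (fun D => x ∈ D)).card : ℝ) := by
      have : m * 𝒟.card ≤ ∑ D ∈ 𝒟, D.card := by
        calc m * 𝒟.card = ∑ _D ∈ 𝒟, m := by rw [Finset.sum_const, smul_eq_mul, mul_comm]
        _ ≤ ∑ D ∈ 𝒟, D.card := Finset.sum_le_sum hD
      rw [← hsum] at this
      exact_mod_cast this
    have hex : ∃ x : α, (m : ℝ) * 𝒟.card ≤ (M : ℝ) * ((𝒟.filter (fun D => x ∈ D)).card : ℝ) := by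
      by_contra hcon
      push_neg at hcon
      have hlt : ∑ x : α, (M : ℝ) * ((𝒟.filter (fun D => x ∈ D)).card : ℝ) <
          ∑ _x : α, (m : ℝ) * 𝒟.card :=
        Finset.sum_lt_sum_of_nonempty Finset.univ_nonempty (fun x _ => hcon x)
      rw [← Finset.mul_sum, Finset.sum_const, Finset.card_univ, ← hM, nsmul_eq_mul] at hlt
      have := (mul_lt_mul_iff_right₀ hMR).mp hlt
      linarith
    obtain ⟨x, hx⟩ := hex
    set 𝒟' := 𝒟.filter (fun D => x ∉ D) with h𝒟'
    have hcards : (𝒟.filter (fun D => x ∈ D)).card + 𝒟'.card = 𝒟.card :=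
      Finset.card_filter_add_card_filter_not _
    have hcard' : (𝒟'.card : ℝ) ≤ (𝒟.card : ℝ) * (1 - (m : ℝ) / M) := by
      have heq : (𝒟'.card : ℝ) = (𝒟.card : ℝ) - ((𝒟.filter (fun D => x ∈ D)).card : ℝ) := by
        have := hcards; push_cast [← this]; ring
      have hdeg : (m : ℝ) * 𝒟.card / M ≤ ((𝒟.filter (fun D => x ∈ D)).card : ℝ) := by
        rw [div_le_iff₀ hMR]; linarith
      have hexp : (𝒟.card : ℝ) * (1 - (m : ℝ) / M) = 𝒟.card - m * 𝒟.card / M := by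
        ring
      rw [heq, hexp]
      linarith
    have h' : (𝒟'.card : ℝ) * (1 - (m : ℝ) / M) ^ t < 1 := by
      calc (𝒟'.card : ℝ) * (1 - (m : ℝ) / M) ^ t
          ≤ ((𝒟.card : ℝ) * (1 - (m : ℝ) / M)) * (1 - (m : ℝ) / M) ^ t :=
            mul_le_mul_of_nonneg_right hcard' (pow_nonneg hq0 t)
        _ = (𝒟.card : ℝ) * (1 - (m : ℝ) / M) ^ (t + 1) := by ring
        _ < 1 := h
    obtain ⟨C', hC'le, hC'hit⟩ := ih 𝒟' (fun D hDm => hD D (Finset.mem_of_mem_filter _ hDm)) h'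
    refine ⟨insert x C', le_trans (Finset.card_insert_le _ _) (by omega), ?_⟩
    intro D hDm
    by_cases hxD : x ∈ D
    · exact ⟨x, Finset.mem_inter.mpr ⟨hxD, Finset.mem_insert_self _ _⟩⟩
    · obtain ⟨c, hc⟩ := hC'hit D (Finset.mem_filter.mpr ⟨hDm, hxD⟩)
      rw [Finset.mem_inter] at hc
      exact ⟨c, Finset.mem_inter.mpr ⟨hc.1, Finset.mem_insert_of_mem hc.2⟩⟩


lemma mem_ballH_self (n r : ℕ) (x : Fin n → Bool) : x ∈ ballH n r x := by
  simp [ballH]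

lemma ballH_subset_biUnion {n r : ℕ} {X : Finset (Fin n → Bool)} {x : Fin n → Bool}
    (hx : x ∈ X) : ballH n r x ⊆ X.biUnion (ballH n r) := fun y hy =>
  Finset.mem_biUnion.mpr ⟨x, hx, hy⟩

set_option maxHeartbeats 1000000 in
/-- If `m_n(r,ℓ) > 0`, then `M_r^{(≤ℓ)}(n) ≤ 2^{n+1}·ℓ·n / m_n(r,ℓ) + 2`. -/
theorem Mid_le_of_mlow_pos (n r ℓ : ℕ) (hr : 1 ≤ r) (hℓ : 1 ≤ ℓ) (hn : 1 ≤ n)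
    (hm : 0 < mlow n r ℓ) :
    (∃ C : Finset (Fin n → Bool), IdCode n r ℓ C ∧
      (C.card : ℝ) ≤ 2 ^ (n + 1) * ℓ * n / (mlow n r ℓ : ℝ) + 2) ∧
    (Mid n r ℓ : ℝ) ≤ 2 ^ (n + 1) * ℓ * n / (mlow n r ℓ : ℝ) + 2 := by
    classical
  set m := mlow n r ℓ with hmdef
  set B : ℝ := 2 ^ (n + 1) * ℓ * n / (m : ℝ) with hBdef
  have hmR : (0 : ℝ) < (m : ℝ) := by exact_mod_cast hm
  have hBnn : 0 ≤ B := by positivity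
  have hℓR : (1 : ℝ) ≤ (ℓ : ℝ) := by exact_mod_cast hℓ
  -- it suffices to find one good code
  suffices hsuff : ∃ C : Finset (Fin n → Bool), IdCode n r ℓ C ∧
      (C.card : ℝ) ≤ B + 2 by
    obtain ⟨C, hC, hb⟩ := hsuff
    refine ⟨⟨C, hC, hb⟩, le_trans ?_ hb⟩
    have : Mid n r ℓ ≤ C.card := Nat.sInf_le ⟨C, hC, rfl⟩
    exact_mod_cast this
  have hmem_mlow : ∀ X Y : Finset (Fin n → Bool), X ≠ Y → 1 ≤ X.card → X.card ≤ ℓ →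
      1 ≤ Y.card → Y.card ≤ ℓ →
      m ≤ (symmDiff (X.biUnion (ballH n r)) (Y.biUnion (ballH n r))).card :=
    fun X Y h1 h2 h3 h4 h5 => Nat.sInf_le ⟨X, Y, h1, h2, h3, h4, h5, rfl⟩
  -- separation of nonempty biUnions
  have hsep : ∀ X Y : Finset (Fin n → Bool), X ≠ Y → 1 ≤ X.card → X.card ≤ ℓ →
      1 ≤ Y.card → Y.card ≤ ℓ →
      X.biUnion (ballH n r) ≠ Y.biUnion (ballH n r) := by
    intro X Y h1 h2 h3 h4 h5 heq
    have h0 := hmem_mlow X Y h1 h2 h3 h4 h5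
    rw [heq, symmDiff_self] at h0
    simp only [bot_eq_empty, Finset.card_empty] at h0
    omega
  by_cases hn2 : 2 ≤ n
  · -- main case: greedy construction
    set α := (Fin n → Bool)
    set S : Finset (Finset α) :=
      Finset.univ.filter (fun X => 1 ≤ X.card ∧ X.card ≤ ℓ) with hSdef
    set P : Finset (Finset α × Finset α) := (S ×ˢ S).filter (fun p => p.1 ≠ p.2) with hPdef
    set 𝒟 : Finset (Finset α) :=
      P.image (fun p => symmDiff (p.1.biUnion (ballH n r)) (p.2.biUnion (ballH n r)))
      with h𝒟def
    have hmemS : ∀ X : Finset α, X ∈ S ↔ 1 ≤ X.card ∧ X.card ≤ ℓ := by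
      intro X; simp [hSdef]
    have hDlow : ∀ D ∈ 𝒟, m ≤ D.card := by
      intro D hD
      obtain ⟨p, hp, rfl⟩ := Finset.mem_image.mp hD
      rw [hPdef, Finset.mem_filter, Finset.mem_product, hmemS, hmemS] at hp
      exact hmem_mlow p.1 p.2 hp.2 hp.1.1.1 hp.1.1.2 hp.1.2.1 hp.1.2.2
    -- cardinality bounds
    have hαcard : Fintype.card α = 2 ^ n := by simp [α]
    have hScard : S.card ≤ ℓ * (2 ^ n) ^ ℓ := by
      have hsub : S ⊆ (Finset.Icc 1 ℓ).biUnion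
          (fun k => (Finset.univ : Finset α).powersetCard k) := by
        intro X hX
        rw [hmemS] at hX
        exact Finset.mem_biUnion.mpr ⟨X.card, Finset.mem_Icc.mpr ⟨hX.1, hX.2⟩,
          Finset.mem_powersetCard.mpr ⟨Finset.subset_univ X, rfl⟩⟩
      calc S.card ≤ _ := Finset.card_le_card hsub
        _ ≤ ∑ k ∈ Finset.Icc 1 ℓ, ((Finset.univ : Finset α).powersetCard k).card :=
          Finset.card_biUnion_le
        _ ≤ ∑ _k ∈ Finset.Icc 1 ℓ, (2 ^ n) ^ ℓ := by
          refine Finset.sum_le_sum (fun k hk => ?_)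
          rw [Finset.card_powersetCard, Finset.card_univ, hαcard]
          calc (2 ^ n).choose k ≤ (2 ^ n) ^ k := Nat.choose_le_pow _ _
            _ ≤ (2 ^ n) ^ ℓ := Nat.pow_le_pow_right (Nat.one_le_two_pow)
                (Finset.mem_Icc.mp hk).2
        _ = ℓ * (2 ^ n) ^ ℓ := by rw [Finset.sum_const, Nat.Icc_eq_range', smul_eq_mul]; simp
    have h𝒟card : 𝒟.card ≤ (ℓ * (2 ^ n) ^ ℓ) ^ 2 := by
      calc 𝒟.card ≤ P.card := Finset.card_image_le
        _ ≤ (S ×ˢ S).card := Finset.card_filter_le _ _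
        _ = S.card * S.card := Finset.card_product _ _
        _ ≤ (ℓ * (2 ^ n) ^ ℓ) ^ 2 := by rw [sq]; exact Nat.mul_le_mul hScard hScard
    -- numeric setup
    set q : ℝ := (m : ℝ) / (2 ^ n : ℝ) with hqdef
    set t : ℕ := Nat.floor B + 1 with htdef
    have h2nR : (0 : ℝ) < (2 : ℝ) ^ n := by positivity
    have hm2n : m ≤ 2 ^ n := by
      have hx : ((fun _ => false : α), (fun _ => true : α)).1 ≠ (fun _ => true : α) := by
        intro h
        have := congrFun h ⟨0, hn⟩
        simp at this
      have h0 := hmem_mlow {fun _ => false} {fun _ => true}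
        (by simp [Finset.singleton_inj]; exact hx) (by simp) (by simp [hℓ])
        (by simp) (by simp [hℓ])
      calc m ≤ _ := h0
        _ ≤ Fintype.card α := Finset.card_le_univ _
        _ = 2 ^ n := hαcard
    have hq0 : 0 ≤ 1 - q := by
      rw [hqdef, sub_nonneg, div_le_one h2nR]
      exact_mod_cast hm2n
    have hqpos : 0 < q := by positivity
    -- key numeric inequality
    have hqB : q * B = 2 * ℓ * n := by
      rw [hqdef, hBdef]
      field_simp
      ring
    have hqt : 2 * (ℓ : ℝ) * n < q * t := by
      have h1 : B < (t : ℝ) := by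
        rw [htdef]; push_cast; exact Nat.lt_floor_add_one B
      calc 2 * (ℓ : ℝ) * n = q * B := hqB.symm
        _ < q * t := by exact mul_lt_mul_of_pos_left h1 hqpos
    have hlog2 : Real.log 2 < 0.6931471808 := Real.log_two_lt_d9
    have hsq : Real.sqrt ℓ ^ 2 = (ℓ : ℝ) := Real.sq_sqrt (by positivity)
    have hs1 : (1 : ℝ) ≤ Real.sqrt ℓ := by
      rw [show (1:ℝ) = Real.sqrt 1 by simp]
      exact Real.sqrt_le_sqrt hℓR
    have hlogℓ : Real.log ℓ ≤ 2 * (Real.sqrt ℓ - 1) := by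
      have h2 := Real.log_sqrt (show (0:ℝ) ≤ (ℓ:ℝ) by positivity)
      have h3 := Real.log_le_sub_one_of_pos (show (0:ℝ) < Real.sqrt ℓ by linarith)
      linarith
    have hn2R : (2 : ℝ) ≤ (n : ℝ) := by exact_mod_cast hn2
    have hkey : 2 * Real.log ℓ + 2 * (ℓ : ℝ) * n * Real.log 2 ≤ 2 * (ℓ : ℝ) * n := by
      have hc1 : (0.3068528192 : ℝ) ≤ 1 - Real.log 2 := by linarith
      have hstep3 : 4 * Real.sqrt ℓ - 4 ≤ 4 * 0.3068528192 * Real.sqrt ℓ ^ 2 := by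
        nlinarith [sq_nonneg (Real.sqrt ℓ - 1.63)]
      have hstep4 : 4 * (0.3068528192 : ℝ) * (ℓ : ℝ) ≤ 2 * (ℓ : ℝ) * n * (1 - Real.log 2) := by
        have h5 : 2 * (0.3068528192 : ℝ) ≤ (n : ℝ) * (1 - Real.log 2) := by
          nlinarith [mul_nonneg (by linarith : (0:ℝ) ≤ (n:ℝ) - 2)
            (by linarith : (0:ℝ) ≤ 1 - Real.log 2)]
        have h6 := mul_le_mul_of_nonneg_left h5 (by linarith : (0:ℝ) ≤ 2 * (ℓ : ℝ))
        linarith [h6]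
      linarith [hlogℓ, hstep3, hstep4, hsq]
    -- the greedy hypothesis
    have hNpos : (0 : ℝ) < ((ℓ : ℝ) * ((2:ℝ) ^ n) ^ ℓ) ^ 2 := by positivity
    have hlogN : Real.log (((ℓ : ℝ) * ((2:ℝ) ^ n) ^ ℓ) ^ 2) < q * t := by
      have hval : Real.log (((ℓ : ℝ) * ((2:ℝ) ^ n) ^ ℓ) ^ 2)
          = 2 * Real.log ℓ + 2 * (ℓ:ℝ) * n * Real.log 2 := by
        rw [Real.log_pow, Real.log_mul (by positivity) (by positivity), Real.log_pow,
          Real.log_pow]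
        push_cast
        ring
      rw [hval]
      linarith [hkey, hqt]
    have hcond : ((𝒟.card : ℝ)) * (1 - q) ^ t < 1 := by
      have hDN : (𝒟.card : ℝ) ≤ ((ℓ : ℝ) * ((2:ℝ) ^ n) ^ ℓ) ^ 2 := by
        calc (𝒟.card : ℝ) ≤ ((ℓ * (2 ^ n) ^ ℓ) ^ 2 : ℕ) := by exact_mod_cast h𝒟card
          _ = ((ℓ : ℝ) * ((2:ℝ) ^ n) ^ ℓ) ^ 2 := by push_cast; ring
      have hexp : (1 - q) ^ t ≤ Real.exp (-(q * t)) := by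
        have h1 : 1 - q ≤ Real.exp (-q) := by
          have := Real.add_one_le_exp (-q); linarith
        calc (1 - q) ^ t ≤ (Real.exp (-q)) ^ t := pow_le_pow_left₀ hq0 h1 t
          _ = Real.exp ((t : ℝ) * (-q)) := (Real.exp_nat_mul _ t).symm
          _ = Real.exp (-(q * t)) := by ring_nf
      calc (𝒟.card : ℝ) * (1 - q) ^ t
          ≤ ((ℓ : ℝ) * ((2:ℝ) ^ n) ^ ℓ) ^ 2 * Real.exp (-(q * t)) := by
            apply mul_le_mul hDN hexp (pow_nonneg hq0 t) (le_of_lt hNpos)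
        _ = Real.exp (Real.log (((ℓ : ℝ) * ((2:ℝ) ^ n) ^ ℓ) ^ 2) + -(q * t)) := by
            rw [Real.exp_add, Real.exp_log hNpos]
        _ < 1 := by
            rw [show (1:ℝ) = Real.exp 0 by simp]
            exact Real.exp_lt_exp.mpr (by linarith)
    -- apply greedy
    have hcond' : ((𝒟.card : ℝ)) * (1 - (m : ℝ) / (Fintype.card α : ℝ)) ^ t < 1 := by
      rw [hαcard]
      push_cast
      exact hcond
    obtain ⟨C, hCle, hChit⟩ := hit_greedy m hm t 𝒟 hDlow hcond'
    -- at most one x₀ with empty ball-intersection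
    have hU : ∀ x y : α, x ≠ y →
        ((ballH n r x) ∩ C).Nonempty ∨ ((ballH n r y) ∩ C).Nonempty := by
      intro x y hxy
      have hxS : ({x} : Finset α) ∈ S := (hmemS _).mpr (by simp [hℓ])
      have hyS : ({y} : Finset α) ∈ S := (hmemS _).mpr (by simp [hℓ])
      have hpP : (({x} : Finset α), ({y} : Finset α)) ∈ P := by
        rw [hPdef, Finset.mem_filter, Finset.mem_product]
        exact ⟨⟨hxS, hyS⟩, by simpa [Finset.singleton_inj] using hxy⟩
      have hD : symmDiff (({x} : Finset α).biUnion (ballH n r))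
          (({y} : Finset α).biUnion (ballH n r)) ∈ 𝒟 := by
        rw [h𝒟def]
        exact Finset.mem_image.mpr ⟨_, hpP, rfl⟩
      obtain ⟨c, hc⟩ := hChit _ hD
      rw [Finset.mem_inter, Finset.singleton_biUnion, Finset.singleton_biUnion,
        Finset.mem_symmDiff] at hc
      rcases hc.1 with ⟨h1, _⟩ | ⟨h1, _⟩
      · exact Or.inl ⟨c, Finset.mem_inter.mpr ⟨h1, hc.2⟩⟩
      · exact Or.inr ⟨c, Finset.mem_inter.mpr ⟨h1, hc.2⟩⟩
    obtain ⟨x₀, hx₀⟩ : ∃ x₀ : α, ∀ x : α, ((ballH n r x) ∩ insert x₀ C).Nonempty := by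
      by_cases hbad : ∃ x : α, (ballH n r x) ∩ C = ∅
      · obtain ⟨x₀, hx₀⟩ := hbad
        refine ⟨x₀, fun x => ?_⟩
        by_cases hx : ((ballH n r x) ∩ C).Nonempty
        · obtain ⟨c, hc⟩ := hx
          rw [Finset.mem_inter] at hc
          exact ⟨c, Finset.mem_inter.mpr ⟨hc.1, Finset.mem_insert_of_mem hc.2⟩⟩
        · have hxe : (ballH n r x) ∩ C = ∅ := Finset.not_nonempty_iff_eq_empty.mp hx
          have hxx₀ : x = x₀ := by
            by_contra hne
            rcases hU x x₀ hne with h | h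
            · rw [hxe] at h; exact Finset.not_nonempty_empty h
            · rw [hx₀] at h; exact Finset.not_nonempty_empty h
          subst hxx₀
          exact ⟨x, Finset.mem_inter.mpr ⟨mem_ballH_self n r x, Finset.mem_insert_self _ _⟩⟩
      · push_neg at hbad
        refine ⟨fun _ => false, fun x => ?_⟩
        obtain ⟨c, hc⟩ := hbad x
        rw [Finset.mem_inter] at hc
        exact ⟨c, Finset.mem_inter.mpr ⟨hc.1, Finset.mem_insert_of_mem hc.2⟩⟩
    set C' : Finset α := insert x₀ C with hC'def
    have hIdC' : IdCode n r ℓ C' := by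
      refine ⟨⟨x₀, Finset.mem_insert_self _ _⟩, ?_⟩
      intro X Y hX hY hXY heq
      by_cases hXe : X = ∅
      · subst hXe
        obtain ⟨y, hy⟩ := Finset.nonempty_iff_ne_empty.mpr (Ne.symm hXY)
        obtain ⟨c, hc⟩ := hx₀ y
        rw [Finset.mem_inter] at hc
        have hcY : c ∈ Y.biUnion (ballH n r) ∩ C' :=
          Finset.mem_inter.mpr ⟨ballH_subset_biUnion hy hc.1, hc.2⟩
        rw [← heq] at hcY
        simp at hcY
      by_cases hYe : Y = ∅
      · subst hYe
        obtain ⟨x, hx⟩ := Finset.nonempty_iff_ne_empty.mpr hXY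
        obtain ⟨c, hc⟩ := hx₀ x
        rw [Finset.mem_inter] at hc
        have hcX : c ∈ X.biUnion (ballH n r) ∩ C' :=
          Finset.mem_inter.mpr ⟨ballH_subset_biUnion hx hc.1, hc.2⟩
        rw [heq] at hcX
        simp at hcX
      · have hXn : 1 ≤ X.card := Finset.one_le_card.mpr (Finset.nonempty_iff_ne_empty.mpr hXe)
        have hYn : 1 ≤ Y.card := Finset.one_le_card.mpr (Finset.nonempty_iff_ne_empty.mpr hYe)
        have hpP : (X, Y) ∈ P := by
          rw [hPdef, Finset.mem_filter, Finset.mem_product]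
          exact ⟨⟨(hmemS _).mpr ⟨hXn, hX⟩, (hmemS _).mpr ⟨hYn, hY⟩⟩, hXY⟩
        have hD : symmDiff (X.biUnion (ballH n r)) (Y.biUnion (ballH n r)) ∈ 𝒟 := by
          rw [h𝒟def]; exact Finset.mem_image.mpr ⟨_, hpP, rfl⟩
        obtain ⟨c, hc⟩ := hChit _ hD
        rw [Finset.mem_inter, Finset.mem_symmDiff] at hc
        have hcC' : c ∈ C' := Finset.mem_insert_of_mem hc.2
        rcases hc.1 with ⟨h1, h2⟩ | ⟨h1, h2⟩
        · have : c ∈ Y.biUnion (ballH n r) ∩ C' := by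
            rw [← heq]; exact Finset.mem_inter.mpr ⟨h1, hcC'⟩
          exact h2 (Finset.mem_inter.mp this).1
        · have : c ∈ X.biUnion (ballH n r) ∩ C' := by
            rw [heq]; exact Finset.mem_inter.mpr ⟨h1, hcC'⟩
          exact h2 (Finset.mem_inter.mp this).1
    refine ⟨C', hIdC', ?_⟩
    have hc1 : C'.card ≤ t + 1 := le_trans (Finset.card_insert_le _ _) (by omega)
    have hfl : ((Nat.floor B : ℕ) : ℝ) ≤ B := Nat.floor_le hBnn
    calc (C'.card : ℝ) ≤ ((t + 1 : ℕ) : ℝ) := by exact_mod_cast hc1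
      _ = ((Nat.floor B : ℕ) : ℝ) + 2 := by rw [htdef]; push_cast; ring
      _ ≤ B + 2 := by linarith
  · -- small case: n = 1, use the whole space
    have hn1 : n = 1 := by omega
    refine ⟨Finset.univ, ⟨⟨fun _ => false, Finset.mem_univ _⟩, ?_⟩, ?_⟩
    · intro X Y hX hY hXY heq
      rw [Finset.inter_univ, Finset.inter_univ] at heq
      by_cases hXe : X = ∅
      · subst hXe
        obtain ⟨y, hy⟩ := Finset.nonempty_iff_ne_empty.mpr (Ne.symm hXY)
        have : y ∈ Y.biUnion (ballH n r) := ballH_subset_biUnion hy (mem_ballH_self n r y)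
        rw [← heq] at this
        simp at this
      by_cases hYe : Y = ∅
      · subst hYe
        obtain ⟨x, hx⟩ := Finset.nonempty_iff_ne_empty.mpr hXY
        have : x ∈ X.biUnion (ballH n r) := ballH_subset_biUnion hx (mem_ballH_self n r x)
        rw [heq] at this
        simp at this
      · exact hsep X Y hXY
          (Finset.one_le_card.mpr (Finset.nonempty_iff_ne_empty.mpr hXe)) hX
          (Finset.one_le_card.mpr (Finset.nonempty_iff_ne_empty.mpr hYe)) hY heq
    · have : ((Finset.univ : Finset (Fin n → Bool)).card : ℝ) = 2 := by
        rw [Finset.card_univ]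
        subst hn1
        simp
      rw [this]
      linarith
end

section
/- Let n ≥ 1, 0 ≤ r ≤ n − 1, ℓ ≥ 1 and let C ⊆ 𝔽ⁿ be an (r,≤ℓ)-identifying code. Then |𝔽ⁿ \ B_{n−r−1}(C)| ≤ 1, i.e., at most one word of 𝔽ⁿ is at Hamming distance greater than n − r − 1 from every codeword of C. -/
open Finset

/-- For an `(r,≤ℓ)`-identifying code `C` with `0 ≤ r ≤ n-1`, at most one word
of `𝔽ⁿ` is at distance greater than `n - r - 1` from every codeword of `C`. -/
theorem identifying_code_almost_covers (n r ℓ : ℕ) (hn : 1 ≤ n) (hr : r + 1 ≤ n)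
    (hℓ : 1 ≤ ℓ) (C : Finset (Fin n → Bool)) (hC : IdCode n r ℓ C) :
    (Finset.univ.filter (fun x : Fin n → Bool =>
      ∀ c ∈ C, n - r - 1 < hammingDist x c)).card ≤ 1 := by
  by_contra h
  push_neg at h
  obtain ⟨x, hx, y, hy, hxy⟩ := Finset.one_lt_card.mp h
  simp only [Finset.mem_filter] at hx hy
  -- complement map
  have compl_dist : ∀ z c : Fin n → Bool,
      hammingDist (fun i => !z i) c + hammingDist z c = n := by
    intro z c
    unfold hammingDist
    have : ∀ i : Fin n, ((fun i => !z i) i ≠ c i) ↔ ¬ (z i ≠ c i) := by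
      intro i
      cases hz : z i <;> cases hc : c i <;> simp [hz, hc]
    rw [Finset.filter_congr (fun i _ => this i)]
    rw [Finset.filter_not, Finset.card_sdiff_of_subset (Finset.filter_subset _ _),
      Finset.card_univ, Fintype.card_fin]
    have hle : (Finset.univ.filter fun i => z i ≠ c i).card ≤ n := by
      simpa using Finset.card_filter_le Finset.univ (fun i => z i ≠ c i)
    omega
  have key : ∀ z : Fin n → Bool, (∀ c ∈ C, n - r - 1 < hammingDist z c) →
      (({fun i => !z i} : Finset (Fin n → Bool)).biUnion (ballH n r)) ∩ C = C := by
    intro z hz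
    apply Finset.inter_eq_right.mpr
    intro c hc
    simp only [Finset.singleton_biUnion, ballH, Finset.mem_filter, Finset.mem_univ,
      true_and]
    have h1 := hz c hc
    have h2 := compl_dist z c
    omega
  have hne : ({fun i => !x i} : Finset (Fin n → Bool)) ≠ {fun i => !y i} := by
    intro he
    apply hxy
    have := Finset.singleton_injective he
    funext i
    have := congrFun this i
    cases hxi : x i <;> cases hyi : y i <;> simp_all
  exact hC.2 _ _ (by simp [hℓ]) (by simp [hℓ]) hne
    (by rw [key x hx.2, key y hy.2])
end

section
/- For every n ≥ 1, every r with 0 ≤ r ≤ n − 1 and every ℓ ≥ 1, every (r,≤ℓ)-identifying code C in 𝔽ⁿ satisfies |C| ≥ max( 2ⁿ / Σ_{i=0}^{r} binom(n,i), (2ⁿ − 1) / Σ_{i=0}^{n−r−1} binom(n,i) ); in particular M_r^{(≤ℓ)}(n) ≥ M_r^{(≤1)}(n) ≥ max( 2ⁿ/V(n,r), (2ⁿ−1)/V(n,n−r−1) ), where V(n,s) = Σ_{i=0}^{s} binom(n,i). -/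
open Finset

lemma sphere_card (n i : ℕ) (x : Fin n → Bool) :
    (univ.filter (fun y => hammingDist x y = i)).card = n.choose i := by
  have hp : (Finset.powersetCard i (univ : Finset (Fin n))).card = n.choose i := by
    simp [Finset.card_powersetCard]
  rw [← hp]
  apply Finset.card_bij' (fun y _ => univ.filter (fun j => x j ≠ y j))
    (fun S _ => fun j => if j ∈ S then !(x j) else x j)
  · intro y hy
    simp only [mem_filter, mem_univ, true_and] at hy
    simp only [Finset.mem_powersetCard]
    exact ⟨subset_univ _, hy⟩
  · intro S hS
    simp only [Finset.mem_powersetCard] at hS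
    simp only [mem_filter, mem_univ, true_and]
    rw [← hS.2, hammingDist]
    congr 1
    ext j
    by_cases h : j ∈ S <;> simp [h]
  · intro y hy
    funext j
    rcases eq_or_ne (x j) (y j) with h | h <;> simp [h] <;>
      revert h <;> cases x j <;> cases y j <;> simp
  · intro S hS
    ext j
    by_cases h : j ∈ S <;> simp [h]

lemma ballH_card (n r : ℕ) (x : Fin n → Bool) :
    (ballH n r x).card = ∑ i ∈ Finset.range (r + 1), n.choose i := by
  have hdec : ballH n r x = (Finset.range (r+1)).biUnion
      (fun i => univ.filter (fun y => hammingDist x y = i)) := by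
    ext y
    simp [ballH, Nat.lt_succ_iff]
  rw [hdec, Finset.card_biUnion]
  · exact Finset.sum_congr rfl (fun i _ => sphere_card n i x)
  · intro a _ b _ hab
    simp only [Finset.disjoint_left, mem_filter]
    rintro y ⟨_, h1⟩ ⟨_, h2⟩
    exact hab (h1 ▸ h2 ▸ rfl)

lemma dist_compl (n : ℕ) (y c : Fin n → Bool) :
    hammingDist y c + hammingDist y (fun i => !(c i)) = n := by
  rw [hammingDist, hammingDist]
  have h2 : (univ.filter fun i => y i ≠ !(c i)) = univ.filter (fun i => ¬ (y i ≠ c i)) := by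
    apply Finset.filter_congr
    intro j _
    cases y j <;> cases c j <;> simp
  rw [h2, Finset.card_filter_add_card_filter_not, Finset.card_univ, Fintype.card_fin]

/-- Every `(r,≤ℓ)`-identifying code `C` in `𝔽ⁿ` (with `0 ≤ r ≤ n-1`, `ℓ ≥ 1`)
satisfies `|C| ≥ max(2ⁿ/V(n,r), (2ⁿ-1)/V(n,n-r-1))`; hence the same lower bound holds
for `M_r^{(≤ℓ)}(n) ≥ M_r^{(≤1)}(n)`. -/
theorem identifying_code_card_lower_bound (n r ℓ : ℕ) (hn : 1 ≤ n) (hr : r + 1 ≤ n)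
    (hℓ : 1 ≤ ℓ) (C : Finset (Fin n → Bool)) (hC : IdCode n r ℓ C) :
    (2 : ℝ) ^ n / (∑ i ∈ Finset.range (r + 1), (n.choose i : ℝ)) ≤ C.card ∧
    ((2 : ℝ) ^ n - 1) / (∑ i ∈ Finset.range (n - r - 1 + 1), (n.choose i : ℝ)) ≤ C.card := by
  obtain ⟨hCne, hid⟩ := hC
  have hcardu : (univ : Finset (Fin n → Bool)).card = 2 ^ n := by
    simp [Finset.card_univ]
  -- injectivity on singletons
  have hinj : ∀ y y' : Fin n → Bool, ballH n r y ∩ C = ballH n r y' ∩ C → y = y' := by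
    intro y y' h
    by_contra hne
    apply hid {y} {y'} (by simp [hℓ]) (by simp [hℓ]) (by simpa using hne)
    simpa using h
  constructor
  · -- first bound: C is an r-covering code
    have hV : (0:ℝ) < ∑ i ∈ Finset.range (r + 1), (n.choose i : ℝ) := by
      apply Finset.sum_pos'
      · intro i _; positivity
      · exact ⟨0, Finset.mem_range.2 (Nat.succ_pos r), by simp⟩
    rw [div_le_iff₀ hV]
    have hcov : (univ : Finset (Fin n → Bool)) ⊆ C.biUnion (ballH n r) := by
      intro x _
      have hne : ({x} : Finset (Fin n → Bool)) ≠ ∅ := by simp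
      have := hid {x} ∅ (by simp [hℓ]) (by simp) hne
      simp only [Finset.singleton_biUnion, Finset.biUnion_empty, Finset.empty_inter] at this
      obtain ⟨c, hc⟩ := Finset.nonempty_iff_ne_empty.2 this
      simp only [Finset.mem_inter, ballH, mem_filter, mem_univ, true_and] at hc
      simp only [Finset.mem_biUnion]
      refine ⟨c, hc.2, ?_⟩
      simp only [ballH, mem_filter, mem_univ, true_and]
      rw [hammingDist_comm]
      exact hc.1
    have hcount : (2:ℕ) ^ n ≤ C.card * ∑ i ∈ Finset.range (r + 1), n.choose i := by
      calc (2:ℕ)^n = (univ : Finset (Fin n → Bool)).card := hcardu.symm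
        _ ≤ (C.biUnion (ballH n r)).card := Finset.card_le_card hcov
        _ ≤ ∑ c ∈ C, (ballH n r c).card := Finset.card_biUnion_le
        _ = C.card * ∑ i ∈ Finset.range (r + 1), n.choose i := by
            rw [Finset.sum_congr rfl (fun c _ => ballH_card n r c), Finset.sum_const, smul_eq_mul]
    calc (2:ℝ)^n = ((2^n : ℕ) : ℝ) := by push_cast; ring
      _ ≤ ((C.card * ∑ i ∈ Finset.range (r + 1), n.choose i : ℕ) : ℝ) := by
          exact_mod_cast hcount
      _ = C.card * ∑ i ∈ Finset.range (r + 1), (n.choose i : ℝ) := by push_cast; ring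
  · -- second bound
    set s := n - r - 1 with hs
    have hV : (0:ℝ) < ∑ i ∈ Finset.range (s + 1), (n.choose i : ℝ) := by
      apply Finset.sum_pos'
      · intro i _; positivity
      · exact ⟨0, Finset.mem_range.2 (Nat.succ_pos s), by simp⟩
    rw [div_le_iff₀ hV]
    set P := univ.filter (fun y : Fin n → Bool => ballH n r y ∩ C = C) with hP
    have hP1 : P.card ≤ 1 := by
      apply Finset.card_le_one.2
      intro a ha b hb
      simp only [hP, mem_filter] at ha hb
      exact hinj a b (ha.2.trans hb.2.symm)
    have hcov : univ \ P ⊆ C.biUnion (fun c => ballH n s (fun i => !(c i))) := by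
      intro y hy
      simp only [Finset.mem_sdiff, hP, mem_filter, mem_univ, true_and] at hy
      have hne : ballH n r y ∩ C ≠ C := hy
      have hss : ballH n r y ∩ C ⊂ C := (Finset.inter_subset_right).ssubset_of_ne hne
      obtain ⟨c, hcC, hcn⟩ := Finset.exists_of_ssubset hss
      have hcn' : ¬ hammingDist y c ≤ r := by
        intro h
        exact hcn (Finset.mem_inter.2 ⟨by simpa [ballH] using h, hcC⟩)
      have hd : hammingDist y (fun i => !(c i)) ≤ s := by
        have := dist_compl n y c
        omega
      simp only [Finset.mem_biUnion]
      refine ⟨c, hcC, ?_⟩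
      simp only [ballH, mem_filter, mem_univ, true_and]
      rw [hammingDist_comm]
      exact hd
    have hcount : (2:ℕ) ^ n - 1 ≤ C.card * ∑ i ∈ Finset.range (s + 1), n.choose i := by
      have h1 : (univ \ P).card = 2 ^ n - P.card := by
        rw [Finset.card_sdiff_of_subset (Finset.subset_univ P), hcardu]
      have h2 : (univ \ P).card ≤ C.card * ∑ i ∈ Finset.range (s + 1), n.choose i := by
        calc (univ \ P).card ≤ (C.biUnion (fun c => ballH n s (fun i => !(c i)))).card :=
              Finset.card_le_card hcov
          _ ≤ ∑ c ∈ C, (ballH n s (fun i => !(c i))).card := Finset.card_biUnion_le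
          _ = C.card * ∑ i ∈ Finset.range (s + 1), n.choose i := by
              rw [Finset.sum_congr rfl (fun c _ => ballH_card n s _), Finset.sum_const,
                smul_eq_mul]
      omega
    have h2n : 1 ≤ (2:ℕ)^n := Nat.one_le_two_pow
    calc (2:ℝ)^n - 1 = (((2:ℕ)^n - 1 : ℕ) : ℝ) := by
          push_cast [h2n]; ring
      _ ≤ ((C.card * ∑ i ∈ Finset.range (s + 1), n.choose i : ℕ) : ℝ) := by
          exact_mod_cast hcount
      _ = C.card * ∑ i ∈ Finset.range (s + 1), (n.choose i : ℝ) := by push_cast; ring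
end
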